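/- arXiv:1207.3231 — 6 statements merged into one kernel-verified Lean document; each statement's English description precedes it below -/
import Mathlib

section
/- Let A be a nonnegative adjacency matrix on n agents with Laplacian L. Then 0 is an algebraically simple eigenvalue of L if and only if the associated directed graph (with an edge from j to i whenever a_ij > 0) has a directed spanning tree. -/
open Matrix Finset

/-- The Laplacian of a nonnegative adjacency matrix `A`:
`ℓ_ii = ∑_{j≠i} a_ij` and `ℓ_ij = -a_ij` for `i ≠ j`. -/
def lap {n : ℕ} (A : Matrix (Fin n) (Fin n) ℝ) : Matrix (Fin n) (Fin n) ℝ :=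
  Matrix.of fun i j => if i = j then ∑ k ∈ Finset.univ.erase i, A i k else -A i j

section AuxLemmas
open Polynomial


lemma aux_charpoly_eval {ι : Type*} [Fintype ι] [DecidableEq ι] (M : Matrix ι ι ℝ) (t : ℝ) :
    M.charpoly.eval t = (Matrix.diagonal (fun _ => t) - M).det := by
  rw [Matrix.charpoly]
  have : (Polynomial.evalRingHom t) (Matrix.charmatrix M).det
      = ((Matrix.charmatrix M).map (Polynomial.evalRingHom t)).det := RingHom.map_det _ _
  simp only [coe_evalRingHom] at this
  rw [this]
  congr 1
  ext i j
  by_cases hij : i = j <;>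
    simp [Matrix.charmatrix_apply, Matrix.diagonal_apply, hij, Matrix.sub_apply]

lemma aux_det_sdd {ι : Type*} [Fintype ι] [DecidableEq ι] (M : Matrix ι ι ℝ)
    (h : ∀ i, ∑ j ∈ Finset.univ.erase i, |M i j| < M i i) : M.det ≠ 0 := by
  intro h0
  obtain ⟨v, hv, hMv⟩ := (Matrix.exists_mulVec_eq_zero_iff).mpr h0
  obtain ⟨i0, hi0⟩ : ∃ i, v i ≠ 0 := by
    by_contra hc; push_neg at hc; exact hv (funext hc)
  obtain ⟨i, -, hi⟩ := Finset.exists_max_image Finset.univ (fun i => |v i|) ⟨i0, Finset.mem_univ _⟩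
  have hvi : 0 < |v i| := lt_of_lt_of_le (abs_pos.mpr hi0) (hi i0 (Finset.mem_univ _))
  have hrow : M i i * v i = -∑ j ∈ Finset.univ.erase i, M i j * v j := by
    have := congrFun hMv i
    simp only [Matrix.mulVec, dotProduct, Pi.zero_apply] at this
    rw [← Finset.add_sum_erase _ _ (Finset.mem_univ i)] at this
    linarith
  have h1 : M i i * |v i| ≤ ∑ j ∈ Finset.univ.erase i, |M i j| * |v i| := by
    calc M i i * |v i| = |M i i * v i| := by
          rw [abs_mul, abs_of_pos (lt_of_le_of_lt (Finset.sum_nonneg fun j _ => abs_nonneg _) (h i))]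
      _ = |∑ j ∈ Finset.univ.erase i, M i j * v j| := by rw [hrow, abs_neg]
      _ ≤ ∑ j ∈ Finset.univ.erase i, |M i j * v j| := Finset.abs_sum_le_sum_abs _ _
      _ ≤ ∑ j ∈ Finset.univ.erase i, |M i j| * |v i| := by
          refine Finset.sum_le_sum fun j _ => ?_
          rw [abs_mul]
          exact mul_le_mul_of_nonneg_left (hi j (Finset.mem_univ _)) (abs_nonneg _)
  rw [← Finset.sum_mul] at h1
  nlinarith [h i]

/-- weak diagonal dominance (nonneg diagonal implicit) gives nonnegative determinant -/
lemma aux_det_nonneg {ι : Type*} [Fintype ι] [DecidableEq ι] (B : Matrix ι ι ℝ)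
    (hdd : ∀ i, (∑ j ∈ Finset.univ.erase i, |B i j|) ≤ B i i) : 0 ≤ B.det := by
  cases isEmpty_or_nonempty ι with
  | inl h => simp [Matrix.det_isEmpty]
  | inr h =>
    set q := (-B).charpoly with hqdef
    have hq : ∀ t : ℝ, q.eval t = (Matrix.diagonal (fun _ => t) + B).det := by
      intro t
      rw [hqdef, aux_charpoly_eval, sub_neg_eq_add]
    have hne : ∀ t : ℝ, 0 < t → q.eval t ≠ 0 := by
      intro t ht
      rw [hq]
      apply aux_det_sdd
      intro i
      have h1 : ∑ j ∈ Finset.univ.erase i, |(Matrix.diagonal (fun _ : ι => t) + B) i j|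
          = ∑ j ∈ Finset.univ.erase i, |B i j| := by
        refine Finset.sum_congr rfl fun j hj => ?_
        have hji : i ≠ j := fun hh => (Finset.mem_erase.mp hj).1 hh.symm
        rw [Matrix.add_apply, Matrix.diagonal_apply_ne _ hji, zero_add]
      rw [h1, Matrix.add_apply, Matrix.diagonal_apply_eq]
      exact lt_of_le_of_lt (hdd i) (by linarith)
    have hmonic : q.Monic := Matrix.charpoly_monic _
    have hdeg : 0 < q.degree := by
      have : q.natDegree = Fintype.card ι := Matrix.charpoly_natDegree_eq_dim _
      rw [Polynomial.degree_eq_natDegree hmonic.ne_zero, this]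
      exact_mod_cast Fintype.card_pos
    have htop := q.tendsto_atTop_of_leadingCoeff_nonneg hdeg (by rw [hmonic.leadingCoeff]; norm_num)
    have hpos : ∀ t : ℝ, 0 < t → 0 < q.eval t := by
      intro t ht
      rcases lt_trichotomy (q.eval t) 0 with hlt | h0 | h3
      · obtain ⟨T, hT1, hT2⟩ := ((htop.eventually_ge_atTop 1).and (Filter.eventually_ge_atTop t)).exists
        have hcont : ContinuousOn (fun x => q.eval x) (Set.Icc t T) :=
          (Polynomial.continuous q).continuousOn
        have hmem : (0:ℝ) ∈ Set.Icc (q.eval t) (q.eval T) := ⟨hlt.le, by linarith⟩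
        obtain ⟨s, hs, hs0⟩ := intermediate_value_Icc hT2 hcont hmem
        exact absurd hs0 (hne s (lt_of_lt_of_le ht hs.1))
      · exact absurd h0 (hne t ht)
      · exact h3
    have h0 : q.eval 0 = B.det := by rw [hq]; simp
    rw [← h0]
    have htends : Filter.Tendsto (fun t => q.eval t) (nhdsWithin 0 (Set.Ioi 0)) (nhds (q.eval 0)) :=
      ((Polynomial.continuous q).tendsto 0).mono_left nhdsWithin_le_nhds
    exact ge_of_tendsto htends (eventually_nhdsWithin_of_forall fun t ht => (hpos t ht).le)

lemma lap_apply_ne {n : ℕ} (A : Matrix (Fin n) (Fin n) ℝ) {i j : Fin n} (h : i ≠ j) :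
    lap A i j = -A i j := by simp [lap, h]

lemma lap_apply_eq {n : ℕ} (A : Matrix (Fin n) (Fin n) ℝ) (i : Fin n) :
    lap A i i = ∑ k ∈ Finset.univ.erase i, A i k := by simp [lap]

lemma aux_sum_le {m : ℕ} (A : Matrix (Fin (m+1)) (Fin (m+1)) ℝ)
    (hnonneg : ∀ i j, 0 ≤ A i j) (r : Fin (m+1)) (i : Fin m) :
    (∑ j ∈ Finset.univ.erase i, A (r.succAbove i) (r.succAbove j)) + A (r.succAbove i) r
      ≤ ∑ k ∈ Finset.univ.erase (r.succAbove i), A (r.succAbove i) k := by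
  have hinj : Function.Injective r.succAbove := Fin.succAbove_right_injective
  have himg : ∑ j ∈ Finset.univ.erase i, A (r.succAbove i) (r.succAbove j)
      = ∑ k ∈ (Finset.univ.erase i).image r.succAbove, A (r.succAbove i) k :=
    (Finset.sum_image (fun a _ b _ h => hinj h)).symm
  have hsub : (Finset.univ.erase i).image r.succAbove ⊆
      (Finset.univ.erase (r.succAbove i)).erase r := by
    intro k hk
    obtain ⟨j, hj, rfl⟩ := Finset.mem_image.mp hk
    refine Finset.mem_erase.mpr ⟨Fin.succAbove_ne r j, Finset.mem_erase.mpr ⟨?_, Finset.mem_univ _⟩⟩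
    exact fun hh => (Finset.mem_erase.mp hj).1 (hinj hh)
  have hr_mem : r ∈ Finset.univ.erase (r.succAbove i) :=
    Finset.mem_erase.mpr ⟨(Fin.succAbove_ne r i).symm, Finset.mem_univ _⟩
  calc (∑ j ∈ Finset.univ.erase i, A (r.succAbove i) (r.succAbove j)) + A (r.succAbove i) r
      ≤ (∑ k ∈ (Finset.univ.erase (r.succAbove i)).erase r, A (r.succAbove i) k)
        + A (r.succAbove i) r := by
        rw [himg]
        exact add_le_add_left
          (Finset.sum_le_sum_of_subset_of_nonneg hsub (fun k _ _ => hnonneg _ _)) _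
    _ = _ := Finset.sum_erase_add _ _ hr_mem

lemma aux_minor_ne {m : ℕ} (A : Matrix (Fin (m+1)) (Fin (m+1)) ℝ)
    (hnonneg : ∀ i j, 0 ≤ A i j) (hdiag : ∀ i, A i i = 0) (r : Fin (m+1))
    (hr : ∀ i, Relation.ReflTransGen (fun x y => 0 < A y x) r i) :
    ((lap A).submatrix r.succAbove r.succAbove).det ≠ 0 := by
  have hinj : Function.Injective r.succAbove := Fin.succAbove_right_injective
  intro h0
  obtain ⟨v, hv, hMv⟩ := (Matrix.exists_mulVec_eq_zero_iff).mpr h0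
  obtain ⟨i0, hi0⟩ : ∃ i, v i ≠ 0 := by
    by_contra hc; push_neg at hc; exact hv (funext hc)
  obtain ⟨i1, -, hi1⟩ := Finset.exists_max_image Finset.univ (fun i => |v i|) ⟨i0, Finset.mem_univ _⟩
  set c := |v i1| with hc
  have hcpos : 0 < c := lt_of_lt_of_le (abs_pos.mpr hi0) (hi1 i0 (Finset.mem_univ _))
  have key : ∀ i : Fin m, |v i| = c →
      A (r.succAbove i) r = 0 ∧
        ∀ j : Fin m, 0 < A (r.succAbove i) (r.succAbove j) → |v j| = c := by
    intro i hvi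
    set D := ∑ k ∈ Finset.univ.erase (r.succAbove i), A (r.succAbove i) k with hD
    have hDnn : 0 ≤ D := Finset.sum_nonneg fun k _ => hnonneg _ _
    have hrow : D * v i
        = ∑ j ∈ Finset.univ.erase i, A (r.succAbove i) (r.succAbove j) * v j := by
      have h1 := congrFun hMv i
      simp only [Matrix.mulVec, dotProduct, Pi.zero_apply, Matrix.submatrix_apply] at h1
      rw [← Finset.add_sum_erase _ _ (Finset.mem_univ i), lap_apply_eq] at h1
      have h2 : ∑ j ∈ Finset.univ.erase i, lap A (r.succAbove i) (r.succAbove j) * v j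
          = -∑ j ∈ Finset.univ.erase i, A (r.succAbove i) (r.succAbove j) * v j := by
        rw [← Finset.sum_neg_distrib]
        refine Finset.sum_congr rfl fun j hj => ?_
        rw [lap_apply_ne]
        · ring
        · exact fun hh => (Finset.mem_erase.mp hj).1 (hinj hh).symm
      rw [h2] at h1
      linarith
    have hb1 : D * c ≤ ∑ j ∈ Finset.univ.erase i, A (r.succAbove i) (r.succAbove j) * |v j| := by
      calc D * c = |D * v i| := by rw [abs_mul, abs_of_nonneg hDnn, hvi]
        _ = |∑ j ∈ Finset.univ.erase i, A (r.succAbove i) (r.succAbove j) * v j| := by rw [hrow]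
        _ ≤ ∑ j ∈ Finset.univ.erase i, |A (r.succAbove i) (r.succAbove j) * v j| :=
            Finset.abs_sum_le_sum_abs _ _
        _ = ∑ j ∈ Finset.univ.erase i, A (r.succAbove i) (r.succAbove j) * |v j| := by
            refine Finset.sum_congr rfl fun j _ => ?_
            rw [abs_mul, abs_of_nonneg (hnonneg _ _)]
    have hb2 : ∑ j ∈ Finset.univ.erase i, A (r.succAbove i) (r.succAbove j) * |v j|
        ≤ ∑ j ∈ Finset.univ.erase i, A (r.succAbove i) (r.succAbove j) * c :=
      Finset.sum_le_sum fun j _ =>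
        mul_le_mul_of_nonneg_left (hi1 j (Finset.mem_univ _)) (hnonneg _ _)
    have hb3 : (∑ j ∈ Finset.univ.erase i, A (r.succAbove i) (r.succAbove j))
        + A (r.succAbove i) r ≤ D := aux_sum_le A hnonneg r i
    have hAr : A (r.succAbove i) r = 0 := by
      rw [← Finset.sum_mul] at hb2
      have := hnonneg (r.succAbove i) r
      nlinarith
    refine ⟨hAr, fun j hj => ?_⟩
    by_cases hji : j = i
    · rw [hji]; exact hvi
    · have hjmem : j ∈ Finset.univ.erase i := Finset.mem_erase.mpr ⟨hji, Finset.mem_univ _⟩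
      -- the sum ∑ a * (c - |v a|) = 0 with nonneg terms
      have hzero : ∑ j ∈ Finset.univ.erase i,
          A (r.succAbove i) (r.succAbove j) * (c - |v j|) = 0 := by
        have hb2' : (∑ j ∈ Finset.univ.erase i, A (r.succAbove i) (r.succAbove j)) * c ≤ D * c := by
          have := hnonneg (r.succAbove i) r
          nlinarith
        rw [Finset.sum_mul] at hb2'
        have : ∑ j ∈ Finset.univ.erase i,
            A (r.succAbove i) (r.succAbove j) * (c - |v j|)
            = (∑ j ∈ Finset.univ.erase i, A (r.succAbove i) (r.succAbove j) * c)
              - ∑ j ∈ Finset.univ.erase i, A (r.succAbove i) (r.succAbove j) * |v j| := by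
          rw [← Finset.sum_sub_distrib]
          exact Finset.sum_congr rfl fun j _ => by ring
        rw [this]
        have hle : ∑ j ∈ Finset.univ.erase i, A (r.succAbove i) (r.succAbove j) * |v j|
            ≤ ∑ j ∈ Finset.univ.erase i, A (r.succAbove i) (r.succAbove j) * c := hb2
        linarith
      have hterm := (Finset.sum_eq_zero_iff_of_nonneg (fun a ha =>
        mul_nonneg (hnonneg _ _) (by
          have := hi1 a (Finset.mem_univ _); linarith))).mp hzero j hjmem
      rcases mul_eq_zero.mp hterm with h | h
      · exact absurd h (ne_of_gt hj)
      · linarith [abs_nonneg (v j), hi1 j (Finset.mem_univ j)]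
  have key2 : ∀ x : Fin (m+1), Relation.ReflTransGen (fun x y => 0 < A y x) r x →
      ∀ j : Fin m, r.succAbove j = x → |v j| ≠ c := by
    intro x hx
    induction hx with
    | refl => exact fun j hj _ => Fin.succAbove_ne r j hj
    | @tail b x hb hstep ih =>
        intro j hj hvj
        obtain ⟨hAr, hnb⟩ := key j hvj
        by_cases hbr : b = r
        · rw [hj] at hAr
          rw [hbr] at hstep
          rw [hAr] at hstep
          exact lt_irrefl 0 hstep
        · obtain ⟨j', hj'⟩ := Fin.exists_succAbove_eq (Ne.symm (Ne.symm hbr))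
          exact ih j' hj' (hnb j' (by rw [hj', hj]; exact hstep))
  exact key2 (r.succAbove i1) (hr _) i1 rfl rfl

lemma aux_minor_zero {m : ℕ} (A : Matrix (Fin (m+1)) (Fin (m+1)) ℝ)
    (hnonneg : ∀ i j, 0 ≤ A i j) (r : Fin (m+1))
    (hr : ¬ ∀ i, Relation.ReflTransGen (fun x y => 0 < A y x) r i) :
    ((lap A).submatrix r.succAbove r.succAbove).det = 0 := by
  classical
  have hinj : Function.Injective r.succAbove := Fin.succAbove_right_injective
  push_neg at hr
  obtain ⟨x0, hx0⟩ := hr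
  set Reach : Fin (m+1) → Prop := fun x => Relation.ReflTransGen (fun x y => 0 < A y x) r x
    with hReach
  have hReachr : Reach r := Relation.ReflTransGen.refl
  set B := (lap A).submatrix r.succAbove r.succAbove with hB
  set p : Fin m → Prop := fun i => Reach (r.succAbove i) with hp
  have hAzero : ∀ x y : Fin (m+1), ¬ Reach x → Reach y → A x y = 0 := by
    intro x y hx hy
    by_contra hA
    have : 0 < A x y := lt_of_le_of_ne (hnonneg _ _) (Ne.symm hA)
    exact hx (Relation.ReflTransGen.tail hy this)
  have hblock : ∀ i, ¬ p i → ∀ j, p j → B i j = 0 := by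
    intro i hi j hj
    have hij : i ≠ j := fun h => hi (h ▸ hj)
    rw [hB, Matrix.submatrix_apply, lap_apply_ne, hAzero _ _ hi hj, neg_zero]
    exact fun h => hij (hinj h)
  rw [Matrix.twoBlockTriangular_det B p hblock]
  have hdet0 : (Matrix.toSquareBlockProp B fun i => ¬ p i).det = 0 := by
    obtain ⟨j0, hj0⟩ := Fin.exists_succAbove_eq
      (show x0 ≠ r from fun h => hx0 (by rw [h]))
    have hpj0 : ¬ p j0 := by
      show ¬ Reach (r.succAbove j0)
      rw [hj0]; exact hx0
    rw [← Matrix.exists_mulVec_eq_zero_iff]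
    refine ⟨(fun _ => 1), ?_, ?_⟩
    · intro h
      have := congrFun h ⟨j0, hpj0⟩
      norm_num at this
    · funext a
      obtain ⟨i, hi⟩ := a
      simp only [Matrix.mulVec, dotProduct, mul_one, Pi.zero_apply]
      have hsum : ∑ j : {j // ¬ p j}, (Matrix.toSquareBlockProp B fun i => ¬ p i) ⟨i, hi⟩ j
          = ∑ j ∈ Finset.univ.filter (fun j => ¬ p j), B i j :=
        (Finset.sum_subtype (Finset.univ.filter (fun j => ¬ p j))
          (fun x => by simp) (fun j => B i j)).symm
      rw [hsum]
      have himem : i ∈ Finset.univ.filter (fun j => ¬ p j) := by simp [hi]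
      rw [← Finset.add_sum_erase _ _ himem, hB, Matrix.submatrix_apply, lap_apply_eq]
      have hrest : ∑ j ∈ (Finset.univ.filter (fun j => ¬ p j)).erase i, B i j
          = -∑ j ∈ (Finset.univ.filter (fun j => ¬ p j)).erase i,
              A (r.succAbove i) (r.succAbove j) := by
        rw [← Finset.sum_neg_distrib]
        refine Finset.sum_congr rfl fun j hj => ?_
        rw [hB, Matrix.submatrix_apply, lap_apply_ne]
        exact fun h => (Finset.mem_erase.mp hj).1 (hinj h).symm
      rw [hrest]
      have hmain : ∑ k ∈ Finset.univ.erase (r.succAbove i), A (r.succAbove i) k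
          = ∑ j ∈ (Finset.univ.filter (fun j => ¬ p j)).erase i,
              A (r.succAbove i) (r.succAbove j) := by
        rw [← Finset.sum_image (f := fun k => A (r.succAbove i) k)
          (g := r.succAbove) (fun a _ b _ h => hinj h)]
        refine (Finset.sum_subset ?_ ?_).symm
        · intro k hk
          obtain ⟨j, hj, rfl⟩ := Finset.mem_image.mp hk
          exact Finset.mem_erase.mpr ⟨fun h => (Finset.mem_erase.mp hj).1 (hinj h),
            Finset.mem_univ _⟩
        · intro k hk hknot
          by_contra hA
          have hApos : 0 < A (r.succAbove i) k :=
            lt_of_le_of_ne (hnonneg _ _) (Ne.symm hA)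
          have hkreach : ¬ Reach k := by
            intro hk2
            have hpi : ¬ p i := hi
            exact hpi (Relation.ReflTransGen.tail hk2 hApos)
          have hkr : k ≠ r := fun h => hkreach (h ▸ hReachr)
          obtain ⟨j, hj⟩ := Fin.exists_succAbove_eq hkr
          refine hknot (Finset.mem_image.mpr ⟨j, ?_, hj⟩)
          refine Finset.mem_erase.mpr ⟨?_, ?_⟩
          · intro h
            rw [h] at hj
            exact (Finset.mem_erase.mp hk).1 hj.symm
          · simp only [Finset.mem_filter, Finset.mem_univ, true_and]
            show ¬ Reach (r.succAbove j)
            rw [hj]; exact hkreach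
      rw [hmain]
      ring
  rw [hdet0, mul_zero]


noncomputable def gdet {n : ℕ} (L : Matrix (Fin n) (Fin n) ℝ) (S : Finset (Fin n)) : ℝ :=
  Matrix.det (Matrix.of fun i j =>
    if i ∈ S then (1 : Matrix (Fin n) (Fin n) ℝ) i j else -L i j)

lemma aux_charpoly_expand {n : ℕ} (L : Matrix (Fin n) (Fin n) ℝ) :
    L.charpoly = ∑ S : Finset (Fin n), Polynomial.monomial S.card (gdet L S) := by
  classical
  set f := (Matrix.detRowAlternating : (Fin n → ℝ[X]) [⋀^Fin n]→ₗ[ℝ[X]] ℝ[X]) with hf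
  set Efam : Fin n → (Fin n → ℝ[X]) := fun i => (1 : Matrix (Fin n) (Fin n) ℝ[X]) i with hEfam
  set E'fam : Fin n → (Fin n → ℝ[X]) := fun i => (X : ℝ[X]) • Efam i with hE'fam
  set Bfam : Fin n → (Fin n → ℝ[X]) := fun i => ((-L).map (Polynomial.C : ℝ →+* ℝ[X])) i
    with hBfam
  have h1 : (Matrix.charmatrix L : Fin n → Fin n → ℝ[X]) = E'fam + Bfam := by
    funext i j
    by_cases hij : i = j <;>
      simp [Matrix.charmatrix_apply, Matrix.diagonal_apply, Matrix.one_apply, hij,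
        hE'fam, hEfam, hBfam, sub_eq_add_neg]
  have h2 : L.charpoly = f.toMultilinearMap (E'fam + Bfam) := by
    rw [Matrix.charpoly]
    show (Matrix.charmatrix L).det = _
    rw [show (Matrix.charmatrix L).det
      = f.toMultilinearMap (Matrix.charmatrix L : Fin n → Fin n → ℝ[X]) from rfl, h1]
  rw [h2, f.toMultilinearMap.map_add_univ E'fam Bfam]
  refine Finset.sum_congr rfl fun S _ => ?_
  have e1 : S.piecewise E'fam Bfam
      = S.piecewise (fun i => (X : ℝ[X]) • (S.piecewise Efam Bfam) i) (S.piecewise Efam Bfam) := by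
    funext i
    by_cases hiS : i ∈ S <;>
      simp [Finset.piecewise_eq_of_mem, Finset.piecewise_eq_of_notMem, hiS, hE'fam]
  rw [e1, f.toMultilinearMap.map_piecewise_smul (fun _ => (X : ℝ[X])) _ S]
  have e2 : S.piecewise Efam Bfam
      = ((Matrix.of fun i j => if i ∈ S then (1 : Matrix (Fin n) (Fin n) ℝ) i j else -L i j).map
          (Polynomial.C : ℝ →+* ℝ[X]) : Fin n → Fin n → ℝ[X]) := by
    funext i j
    by_cases hiS : i ∈ S <;>
      simp [Finset.piecewise_eq_of_mem, Finset.piecewise_eq_of_notMem, hiS, hEfam, hBfam,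
        Matrix.one_apply, apply_ite (Polynomial.C : ℝ → ℝ[X])]
  rw [e2]
  have e3 : f.toMultilinearMap
      ((Matrix.of fun i j => if i ∈ S then (1 : Matrix (Fin n) (Fin n) ℝ) i j else -L i j).map
          (Polynomial.C : ℝ →+* ℝ[X]) : Fin n → Fin n → ℝ[X])
      = (((Polynomial.C : ℝ →+* ℝ[X]).mapMatrix
          (Matrix.of fun i j => if i ∈ S then (1 : Matrix (Fin n) (Fin n) ℝ) i j else -L i j)
            : Matrix (Fin n) (Fin n) ℝ[X])).det := rfl
  rw [e3, ← RingHom.map_det]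
  rw [Finset.prod_const]
  show (X : ℝ[X]) ^ S.card * Polynomial.C (gdet L S) = _
  rw [mul_comm, Polynomial.C_mul_X_pow_eq_monomial]

lemma aux_coeff {n : ℕ} (L : Matrix (Fin n) (Fin n) ℝ) (k : ℕ) :
    L.charpoly.coeff k = ∑ S ∈ Finset.univ.filter (fun S : Finset (Fin n) => S.card = k),
      gdet L S := by
  rw [aux_charpoly_expand, Polynomial.finset_sum_coeff]
  rw [Finset.sum_filter]
  exact Finset.sum_congr rfl fun S _ => by rw [Polynomial.coeff_monomial]

lemma aux_coeff_one {n : ℕ} (L : Matrix (Fin n) (Fin n) ℝ) :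
    L.charpoly.coeff 1 = ∑ r : Fin n, gdet L {r} := by
  rw [aux_coeff]
  have hfilter : Finset.univ.filter (fun S : Finset (Fin n) => S.card = 1)
      = Finset.univ.image (fun r : Fin n => ({r} : Finset (Fin n))) := by
    ext S
    simp only [Finset.mem_filter, Finset.mem_univ, true_and, Finset.mem_image,
      Finset.card_eq_one]
    constructor
    · rintro ⟨a, h⟩; exact ⟨a, h.symm⟩
    · rintro ⟨a, h⟩; exact ⟨a, h.symm⟩
  rw [hfilter, Finset.sum_image (fun a _ b _ h => Finset.singleton_injective h)]

lemma aux_gdet_singleton {m : ℕ} (L : Matrix (Fin (m+1)) (Fin (m+1)) ℝ) (r : Fin (m+1)) :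
    gdet L {r} = (-1 : ℝ) ^ m * (L.submatrix r.succAbove r.succAbove).det := by
  classical
  show (Matrix.of fun i j =>
        if i ∈ ({r} : Finset (Fin (m+1))) then (1 : Matrix (Fin (m+1)) (Fin (m+1)) ℝ) i j
        else -L i j).det = _
  set v : Fin (m+1) → ℝ := fun i => if i = r then 1 else -1 with hv
  set M : Matrix (Fin (m+1)) (Fin (m+1)) ℝ := L.updateRow r (Pi.single r 1) with hM
  have h1 : (Matrix.of fun i j =>
      if i ∈ ({r} : Finset (Fin (m+1))) then (1 : Matrix (Fin (m+1)) (Fin (m+1)) ℝ) i j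
      else -L i j) = Matrix.of fun i j => v i * M i j := by
    ext i j
    by_cases hir : i = r
    · have hir' : i ∈ ({r} : Finset (Fin (m+1))) := Finset.mem_singleton.mpr hir
      simp only [Matrix.of_apply, if_pos hir', hv, if_pos hir, hM, one_mul]
      rw [hir, Matrix.updateRow_self, Matrix.one_apply]
      by_cases hj : r = j
      · subst hj; simp
      · rw [if_neg hj, Pi.single_eq_of_ne (fun h => hj h.symm)]
    · simp only [Matrix.of_apply, Finset.mem_singleton, if_neg hir, hv, hM,
        Matrix.updateRow_ne hir]
      ring
  rw [h1, Matrix.det_mul_column v M]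
  have h2 : ∏ i, v i = (-1 : ℝ) ^ m := by
    rw [← Finset.mul_prod_erase _ _ (Finset.mem_univ r)]
    have : ∀ i ∈ Finset.univ.erase r, v i = -1 := fun i hi => by
      simp [hv, (Finset.mem_erase.mp hi).1]
    rw [Finset.prod_congr rfl this, Finset.prod_const, hv]
    simp [Finset.card_erase_of_mem]
  have h3 : M.det = (L.submatrix r.succAbove r.succAbove).det := by
    rw [Matrix.det_succ_row M r]
    rw [Finset.sum_eq_single r]
    · have hMr : M r r = 1 := by simp [hM]
      have hsub : M.submatrix r.succAbove r.succAbove = L.submatrix r.succAbove r.succAbove := by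
        ext i j
        simp [hM, Matrix.updateRow_ne (Fin.succAbove_ne r i)]
      rw [hMr, hsub]
      have : (-1 : ℝ) ^ ((r : ℕ) + (r : ℕ)) = 1 := Even.neg_one_pow ⟨r, rfl⟩
      rw [this]; ring
    · intro j _ hjr
      have : M r j = 0 := by simp [hM, Pi.single_eq_of_ne hjr]
      rw [this]; ring
    · exact fun h => absurd (Finset.mem_univ r) h
  rw [h2, h3]

lemma aux_det_lap {n : ℕ} [NeZero n] (A : Matrix (Fin n) (Fin n) ℝ) : (lap A).det = 0 := by
  rw [← Matrix.exists_mulVec_eq_zero_iff]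
  refine ⟨fun _ => 1, fun h => by
    have := congrFun h ⟨0, Nat.pos_of_ne_zero (NeZero.ne n)⟩; norm_num at this, ?_⟩
  funext i
  simp only [Matrix.mulVec, dotProduct, mul_one, Pi.zero_apply]
  rw [← Finset.add_sum_erase _ _ (Finset.mem_univ i)]
  have h0 : lap A i i = ∑ k ∈ Finset.univ.erase i, A i k := by simp [lap]
  have h1 : ∑ j ∈ Finset.univ.erase i, lap A i j = -∑ j ∈ Finset.univ.erase i, A i j := by
    rw [← Finset.sum_neg_distrib]
    refine Finset.sum_congr rfl fun j hj => ?_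
    have : i ≠ j := fun h => (Finset.mem_erase.mp hj).1 h.symm
    simp [lap, this]
  rw [h0, h1]; ring

lemma aux_rm {p : ℝ[X]} (hp : p ≠ 0) :
    p.rootMultiplicity 0 = 1 ↔ p.coeff 0 = 0 ∧ p.coeff 1 ≠ 0 := by
  have h1 : (1 ≤ p.rootMultiplicity 0) ↔ p.coeff 0 = 0 := by
    rw [Polynomial.le_rootMultiplicity_iff hp, Polynomial.C_0, sub_zero, pow_one,
      Polynomial.X_dvd_iff]
  have h2 : (p.rootMultiplicity 0 ≤ 1) ↔ ¬(p.coeff 0 = 0 ∧ p.coeff 1 = 0) := by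
    rw [Polynomial.rootMultiplicity_le_iff hp, Polynomial.C_0, sub_zero,
      Polynomial.X_pow_dvd_iff]
    constructor
    · intro h hc
      exact h fun d hd => by interval_cases d; exacts [hc.1, hc.2]
    · intro h hc
      exact h ⟨hc 0 (by norm_num), hc 1 (by norm_num)⟩
  constructor
  · intro h
    refine ⟨h1.mp (by omega), fun hc1 => h2.mp (by omega) ⟨h1.mp (by omega), hc1⟩⟩
  · rintro ⟨h0, hc1⟩
    have ha := h1.mpr h0
    have hb : p.rootMultiplicity 0 ≤ 1 := h2.mpr (fun hc => hc1 hc.2)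
    omega

end AuxLemmas

/-- For a nonnegative adjacency matrix `A` with Laplacian `L`, zero is an algebraically
simple eigenvalue of `L` (its multiplicity as a root of the characteristic polynomial is
one) if and only if the associated directed graph — with an edge from `j` to `i`
whenever `a_ij > 0` — has a directed spanning tree, i.e. there is a vertex `r` from
which every vertex is reachable along directed edges. -/
theorem zero_simple_eigenvalue_iff_directed_spanning_tree
    {n : ℕ} (A : Matrix (Fin n) (Fin n) ℝ)
    (hnonneg : ∀ i j, 0 ≤ A i j) (hdiag : ∀ i, A i i = 0) :
    Polynomial.rootMultiplicity 0 (lap A).charpoly = 1 ↔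
      ∃ r : Fin n, ∀ i : Fin n,
        Relation.ReflTransGen (fun x y => 0 < A y x) r i := by
  cases n with
  | zero =>
    have h1 : (lap A).charpoly = 1 := by
      have h : (Matrix.charmatrix (lap A)).det = 1 := Matrix.det_isEmpty
      rw [Matrix.charpoly, h]
    rw [h1]
    constructor
    · intro h
      rw [show (1 : Polynomial ℝ) = Polynomial.C 1 from (Polynomial.C_1).symm,
        Polynomial.rootMultiplicity_C] at h
      exact absurd h.symm one_ne_zero
    · rintro ⟨r, -⟩; exact r.elim0
  | succ m =>
    have hp0 : (lap A).charpoly ≠ 0 := (Matrix.charpoly_monic _).ne_zero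
    rw [aux_rm hp0]
    have hdet : (lap A).det = 0 := aux_det_lap A
    have hc0 : (lap A).charpoly.coeff 0 = 0 := by
      have h := (Matrix.det_eq_sign_charpoly_coeff (lap A)).symm.trans hdet
      rcases mul_eq_zero.mp h with h1 | h1
      · exact absurd h1 (pow_ne_zero _ (by norm_num))
      · exact h1
    have hc1 : (lap A).charpoly.coeff 1
        = (-1 : ℝ) ^ m * ∑ r : Fin (m+1), ((lap A).submatrix r.succAbove r.succAbove).det := by
      rw [aux_coeff_one, Finset.mul_sum]
      exact Finset.sum_congr rfl fun r _ => aux_gdet_singleton (lap A) r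
    have hminor_nonneg : ∀ r : Fin (m+1),
        0 ≤ ((lap A).submatrix r.succAbove r.succAbove).det := by
      intro r
      apply aux_det_nonneg
      intro i
      have habs : ∑ j ∈ Finset.univ.erase i, |((lap A).submatrix r.succAbove r.succAbove) i j|
          = ∑ j ∈ Finset.univ.erase i, A (r.succAbove i) (r.succAbove j) := by
        refine Finset.sum_congr rfl fun j hj => ?_
        rw [Matrix.submatrix_apply, lap_apply_ne A
          (fun h => (Finset.mem_erase.mp hj).1
            ((Fin.succAbove_right_injective (p := r)) h).symm),
          abs_neg, abs_of_nonneg (hnonneg _ _)]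
      rw [habs, Matrix.submatrix_apply, lap_apply_eq]
      have h1 := aux_sum_le A hnonneg r i
      have h2 := hnonneg (r.succAbove i) r
      linarith
    rw [hc1]
    simp only [hc0, true_and]
    constructor
    · intro h
      by_contra hns
      push_neg at hns
      apply h
      have hz : ∀ r : Fin (m+1), ((lap A).submatrix r.succAbove r.succAbove).det = 0 := by
        intro r
        apply aux_minor_zero A hnonneg r
        intro hall
        obtain ⟨i, hi⟩ := hns r
        exact hi (hall i)
      rw [Finset.sum_eq_zero fun r _ => hz r, mul_zero]
    · rintro ⟨r, hr⟩
      have hpos : 0 < ∑ r : Fin (m+1), ((lap A).submatrix r.succAbove r.succAbove).det :=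
        Finset.sum_pos' (fun r _ => hminor_nonneg r)
          ⟨r, Finset.mem_univ _, lt_of_le_of_ne (hminor_nonneg r)
            (Ne.symm (aux_minor_ne A hnonneg hdiag r hr))⟩
      exact mul_ne_zero (pow_ne_zero _ (by norm_num)) (ne_of_gt hpos)
end

section
/- Let A be a nonnegative adjacency matrix on n agents with Laplacian L. Then the matrix exponential exp(-tL) converges, as t → ∞, to a rank-one matrix of the form 1·νᵀ with ν ∈ ℝ^n entrywise nonnegative, νᵀ1 = 1 and νᵀL = 0, if and only if the associated directed graph has a directed spanning tree. In particular, under this condition, for every initial state x₀ the solution X(t) = exp(-tL)x₀ satisfies Xᵢ(t) - Xⱼ(t) → 0 for all i, j (consensus), with common limit νᵀx₀. -/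
open Matrix Finset Filter Nat

section Aux

variable {n : ℕ}

/-! ### Generic facts about the matrix exponential series -/

lemma expSummableM (X : Matrix (Fin n) (Fin n) ℝ) :
    Summable fun k : ℕ => ((k ! : ℝ))⁻¹ • X ^ k := by
  letI : SeminormedRing (Matrix (Fin n) (Fin n) ℝ) := Matrix.linftyOpSemiNormedRing
  letI : NormedRing (Matrix (Fin n) (Fin n) ℝ) := Matrix.linftyOpNormedRing
  letI : NormedAlgebra ℝ (Matrix (Fin n) (Fin n) ℝ) := Matrix.linftyOpNormedAlgebra
  exact NormedSpace.expSeries_summable' X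

lemma expHasSumM (X : Matrix (Fin n) (Fin n) ℝ) :
    HasSum (fun k : ℕ => ((k ! : ℝ))⁻¹ • X ^ k) (NormedSpace.exp X) := by
  have h := (expSummableM X).hasSum
  rw [NormedSpace.exp_eq_tsum ℝ]; exact h

lemma expEntryHasSum (X : Matrix (Fin n) (Fin n) ℝ) (i j : Fin n) :
    HasSum (fun k : ℕ => ((k ! : ℝ))⁻¹ * (X ^ k) i j) (NormedSpace.exp X i j) := by
  have h := Pi.hasSum.mp (Pi.hasSum.mp (expHasSumM X) i) j
  simpa using h

lemma pow_mulVec_zero {X : Matrix (Fin n) (Fin n) ℝ} {v : Fin n → ℝ} (h : X *ᵥ v = 0)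
    {k : ℕ} (hk : 0 < k) : X ^ k *ᵥ v = 0 := by
  induction k with
  | zero => omega
  | succ m ih =>
    rcases Nat.eq_zero_or_pos m with hm | hm
    · subst hm; simpa using h
    · rw [pow_succ, ← Matrix.mulVec_mulVec, h, Matrix.mulVec_zero]

lemma exp_mulVec_fixed {X : Matrix (Fin n) (Fin n) ℝ} {v : Fin n → ℝ} (h : X *ᵥ v = 0) :
    NormedSpace.exp X *ᵥ v = v := by
  funext i
  have h1 : ∀ j, HasSum (fun k : ℕ => ((k ! : ℝ))⁻¹ * (X ^ k) i j * v j)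
      (NormedSpace.exp X i j * v j) := fun j => (expEntryHasSum X i j).mul_right (v j)
  have h2 : HasSum (fun k : ℕ => ∑ j, ((k ! : ℝ))⁻¹ * (X ^ k) i j * v j)
      (∑ j, NormedSpace.exp X i j * v j) := hasSum_sum fun j _ => h1 j
  have h3 : ∀ k : ℕ, (∑ j, ((k ! : ℝ))⁻¹ * (X ^ k) i j * v j) =
      ((k ! : ℝ))⁻¹ * ((X ^ k *ᵥ v) i) := by
    intro k
    simp [Matrix.mulVec, dotProduct, Finset.mul_sum, mul_assoc]
  have h4 : HasSum (fun k : ℕ => ((k ! : ℝ))⁻¹ * ((X ^ k *ᵥ v) i))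
      ((NormedSpace.exp X *ᵥ v) i) := by
    have : (NormedSpace.exp X *ᵥ v) i = ∑ j, NormedSpace.exp X i j * v j := by
      simp [Matrix.mulVec, dotProduct]
    rw [this]
    have h4 := h2
    simp_rw [h3] at h4
    exact h4
  have h5 : HasSum (fun k : ℕ => ((k ! : ℝ))⁻¹ * ((X ^ k *ᵥ v) i))
      (((0 ! : ℝ))⁻¹ * ((X ^ 0 *ᵥ v) i)) := by
    refine hasSum_single 0 fun k hk => ?_
    rw [pow_mulVec_zero h (Nat.pos_of_ne_zero hk)]
    simp
  have := h4.unique h5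
  rw [this]
  simp

lemma pow_entry_nonneg {B : Matrix (Fin n) (Fin n) ℝ} (hB : ∀ i j, 0 ≤ B i j) (k : ℕ) :
    ∀ i j, 0 ≤ (B ^ k) i j := by
  induction k with
  | zero => intro i j; rw [pow_zero]; by_cases h : i = j <;> simp [Matrix.one_apply, h]
  | succ m ih =>
    intro i j
    rw [pow_succ, Matrix.mul_apply]
    exact Finset.sum_nonneg fun l _ => mul_nonneg (ih i l) (hB l j)

lemma exp_entry_nonneg {B : Matrix (Fin n) (Fin n) ℝ} (hB : ∀ i j, 0 ≤ B i j) (i j : Fin n) :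
    0 ≤ NormedSpace.exp B i j :=
  (expEntryHasSum B i j).nonneg fun k =>
    mul_nonneg (by positivity) (pow_entry_nonneg hB k i j)

lemma exp_entry_lower {B : Matrix (Fin n) (Fin n) ℝ} (hB : ∀ i j, 0 ≤ B i j) (i j : Fin n)
    (m : ℕ) : ((m ! : ℝ))⁻¹ * (B ^ m) i j ≤ NormedSpace.exp B i j :=
  le_hasSum (expEntryHasSum B i j) m fun k _ =>
    mul_nonneg (by positivity) (pow_entry_nonneg hB k i j)

lemma exp_smul_one (a : ℝ) :
    NormedSpace.exp (a • (1 : Matrix (Fin n) (Fin n) ℝ)) = Real.exp a • 1 := by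
  have h1 : HasSum (fun k : ℕ => (a ^ k / k !) • (1 : Matrix (Fin n) (Fin n) ℝ))
      (Real.exp a • 1) := by
    have := (NormedSpace.expSeries_div_hasSum_exp a).smul_const (1 : Matrix (Fin n) (Fin n) ℝ)
    rwa [Real.exp_eq_exp_ℝ]
  have h2 := expHasSumM (a • (1 : Matrix (Fin n) (Fin n) ℝ))
  refine h2.unique ?_
  convert h1 using 2 with k
  rw [smul_pow, one_pow, smul_smul, div_eq_inv_mul]

lemma exp_neg_decomp (L : Matrix (Fin n) (Fin n) ℝ) (t c : ℝ) :
    NormedSpace.exp ((-t) • L) =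
      Real.exp (-(t*c)) • NormedSpace.exp (t • (c • (1 : Matrix (Fin n) (Fin n) ℝ) - L)) := by
  have hsplit : (-t) • L = (-(t*c)) • (1 : Matrix (Fin n) (Fin n) ℝ)
      + t • (c • (1 : Matrix (Fin n) (Fin n) ℝ) - L) := by
    module
  rw [hsplit, Matrix.exp_add_of_commute, exp_smul_one, smul_mul_assoc, one_mul]
  exact (Commute.one_left _).smul_left _ |>.smul_right _

lemma exp_semigroup (L : Matrix (Fin n) (Fin n) ℝ) (s t : ℝ) :
    NormedSpace.exp ((-(s+t)) • L) =
      NormedSpace.exp ((-s) • L) * NormedSpace.exp ((-t) • L) := by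
  have : (-(s+t)) • L = (-s) • L + (-t) • L := by rw [← add_smul]; ring_nf
  rw [this, Matrix.exp_add_of_commute]
  exact (Commute.refl L).smul_left _ |>.smul_right _

/-! ### Row-stochastic bounds -/

lemma mulVec_le_of_row {Q : Matrix (Fin n) (Fin n) ℝ} (h0 : ∀ i j, 0 ≤ Q i j)
    (h1 : ∀ i, ∑ j, Q i j = 1) {x : Fin n → ℝ} {b : ℝ} (hx : ∀ j, x j ≤ b) (i : Fin n) :
    (Q *ᵥ x) i ≤ b := by
  have : (Q *ᵥ x) i = ∑ j, Q i j * x j := by simp [Matrix.mulVec, dotProduct]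
  rw [this]
  calc ∑ j, Q i j * x j ≤ ∑ j, Q i j * b :=
        Finset.sum_le_sum fun j _ => mul_le_mul_of_nonneg_left (hx j) (h0 i j)
    _ = b := by rw [← Finset.sum_mul, h1 i, one_mul]

lemma mulVec_ge_of_row {Q : Matrix (Fin n) (Fin n) ℝ} (h0 : ∀ i j, 0 ≤ Q i j)
    (h1 : ∀ i, ∑ j, Q i j = 1) {x : Fin n → ℝ} {a : ℝ} (hx : ∀ j, a ≤ x j) (i : Fin n) :
    a ≤ (Q *ᵥ x) i := by
  have : (Q *ᵥ x) i = ∑ j, Q i j * x j := by simp [Matrix.mulVec, dotProduct]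
  rw [this]
  calc (a : ℝ) = ∑ j, Q i j * a := by rw [← Finset.sum_mul, h1 i, one_mul]
    _ ≤ ∑ j, Q i j * x j :=
        Finset.sum_le_sum fun j _ => mul_le_mul_of_nonneg_left (hx j) (h0 i j)

lemma contraction_bounds {Q : Matrix (Fin n) (Fin n) ℝ} (h0 : ∀ i j, 0 ≤ Q i j)
    (h1 : ∀ i, ∑ j, Q i j = 1) {r : Fin n} {δ : ℝ} (hδ : ∀ i, δ ≤ Q i r)
    {x : Fin n → ℝ} {a b : ℝ} (hxa : ∀ j, a ≤ x j) (hxb : ∀ j, x j ≤ b) (i : Fin n) :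
    (Q *ᵥ x) i ≤ δ * x r + (1 - δ) * b ∧ δ * x r + (1 - δ) * a ≤ (Q *ᵥ x) i := by
  set g : Fin n → ℝ := fun j => Q i j - (if j = r then δ else 0) with hg
  have hgnn : ∀ j, 0 ≤ g j := by
    intro j
    by_cases h : j = r
    · subst h; simpa [hg] using hδ i
    · simpa [hg, h] using h0 i j
  have hgsum : ∑ j, g j = 1 - δ := by
    simp only [hg, Finset.sum_sub_distrib, h1 i, Finset.sum_ite_eq', Finset.mem_univ, if_true]
  have hexp : (Q *ᵥ x) i = δ * x r + ∑ j, g j * x j := by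
    have h' : (Q *ᵥ x) i = ∑ j, Q i j * x j := by simp [Matrix.mulVec, dotProduct]
    rw [h']
    have : ∑ j, g j * x j = ∑ j, Q i j * x j - δ * x r := by
      simp only [hg, sub_mul, Finset.sum_sub_distrib]
      congr 1
      rw [Finset.sum_congr rfl (fun j _ => by rw [ite_mul, zero_mul]),
        Finset.sum_ite_eq' Finset.univ r (fun j => δ * x j)]
      simp
    rw [this]; ring
  constructor
  · rw [hexp]
    have : ∑ j, g j * x j ≤ (1 - δ) * b := by
      calc ∑ j, g j * x j ≤ ∑ j, g j * b :=
            Finset.sum_le_sum fun j _ => mul_le_mul_of_nonneg_left (hxb j) (hgnn j)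
        _ = (1 - δ) * b := by rw [← Finset.sum_mul, hgsum]
    linarith
  · rw [hexp]
    have : (1 - δ) * a ≤ ∑ j, g j * x j := by
      calc (1 - δ) * a = ∑ j, g j * a := by rw [← Finset.sum_mul, hgsum]
        _ ≤ ∑ j, g j * x j :=
            Finset.sum_le_sum fun j _ => mul_le_mul_of_nonneg_left (hxa j) (hgnn j)
    linarith

/-! ### Entry bounds -/

lemma pow_entry_bound (L : Matrix (Fin n) (Fin n) ℝ) (k : ℕ) (i j : Fin n) :
    |(L ^ k) i j| ≤ (1 + ∑ p, ∑ q, |L p q|) ^ k := by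
  set K : ℝ := 1 + ∑ p, ∑ q, |L p q| with hK
  have hKnn : 0 ≤ ∑ p, ∑ q, |L p q| :=
    Finset.sum_nonneg fun p _ => Finset.sum_nonneg fun q _ => abs_nonneg _
  have hK1 : 1 ≤ K := by simp [hK]; linarith
  induction k generalizing j with
  | zero =>
    rw [pow_zero]
    by_cases h : i = j <;> simp [Matrix.one_apply, h]
  | succ m ih =>
    rw [pow_succ, Matrix.mul_apply, pow_succ]
    calc |∑ l, (L ^ m) i l * L l j| ≤ ∑ l, |(L ^ m) i l * L l j| :=
          Finset.abs_sum_le_sum_abs _ _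
      _ ≤ ∑ l, K ^ m * |L l j| := by
          refine Finset.sum_le_sum fun l _ => ?_
          rw [abs_mul]
          exact mul_le_mul_of_nonneg_right (ih l) (abs_nonneg _)
      _ = K ^ m * ∑ l, |L l j| := by rw [← Finset.mul_sum]
      _ ≤ K ^ m * K := by
          refine mul_le_mul_of_nonneg_left ?_ (by positivity)
          have h1 : ∑ l, |L l j| ≤ ∑ p, ∑ q, |L p q| := by
            refine Finset.sum_le_sum fun l _ => ?_
            exact Finset.single_le_sum (f := fun q => |L l q|)
              (fun q _ => abs_nonneg _) (Finset.mem_univ j)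
          linarith

/-! ### Laplacian facts -/

lemma lap_rowsum (A : Matrix (Fin n) (Fin n) ℝ) (i : Fin n) : ∑ j, lap A i j = 0 := by
  rw [← Finset.add_sum_erase _ _ (Finset.mem_univ i)]
  have h1 : lap A i i = ∑ k ∈ Finset.univ.erase i, A i k := by simp [lap]
  have h2 : ∑ j ∈ Finset.univ.erase i, lap A i j = ∑ j ∈ Finset.univ.erase i, -A i j := by
    refine Finset.sum_congr rfl fun j hj => ?_
    have : i ≠ j := fun h => (Finset.mem_erase.mp hj).1 h.symm
    simp [lap, this]
  rw [h1, h2, Finset.sum_neg_distrib]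
  ring

lemma lap_mulVec_one (A : Matrix (Fin n) (Fin n) ℝ) :
    lap A *ᵥ (fun _ => (1:ℝ)) = 0 := by
  funext i
  simp [Matrix.mulVec, dotProduct, lap_rowsum A i]

section B
variable (A : Matrix (Fin n) (Fin n) ℝ)

/-- the nonnegative matrix `c • 1 - L` with `c = 1 + ∑ A`. -/
noncomputable def Bmat : Matrix (Fin n) (Fin n) ℝ :=
  (1 + ∑ p, ∑ q, A p q) • (1 : Matrix (Fin n) (Fin n) ℝ) - lap A

variable (hnonneg : ∀ i j, 0 ≤ A i j)

lemma Bmat_offdiag {i j : Fin n} (h : i ≠ j) : Bmat A i j = A i j := by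
  simp [Bmat, Matrix.sub_apply, Matrix.smul_apply, Matrix.one_apply, h, lap]

include hnonneg in
lemma Bmat_diag (i : Fin n) : 1 ≤ Bmat A i i := by
  have h1 : Bmat A i i = 1 + ∑ p, ∑ q, A p q - ∑ k ∈ Finset.univ.erase i, A i k := by
    simp [Bmat, Matrix.sub_apply, Matrix.smul_apply, Matrix.one_apply, lap]
  have h2 : ∑ k ∈ Finset.univ.erase i, A i k ≤ ∑ p, ∑ q, A p q := by
    calc ∑ k ∈ Finset.univ.erase i, A i k ≤ ∑ q, A i q :=
          Finset.sum_le_sum_of_subset_of_nonneg (Finset.erase_subset _ _)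
            (fun q _ _ => hnonneg i q)
      _ ≤ ∑ p, ∑ q, A p q :=
          Finset.single_le_sum (f := fun p => ∑ q, A p q)
            (fun p _ => Finset.sum_nonneg fun q _ => hnonneg p q) (Finset.mem_univ i)
  rw [h1]; linarith

include hnonneg in
lemma Bmat_nonneg (i j : Fin n) : 0 ≤ Bmat A i j := by
  by_cases h : i = j
  · subst h; linarith [Bmat_diag A hnonneg i]
  · rw [Bmat_offdiag A h]; exact hnonneg i j

include hnonneg in
lemma Bmat_pow_pos_step {i : Fin n} {m : ℕ} {r : Fin n} (h : 0 < (Bmat A ^ m) i r) :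
    0 < (Bmat A ^ (m+1)) i r := by
  rw [_root_.pow_succ', Matrix.mul_apply]
  refine Finset.sum_pos' (fun l _ => mul_nonneg (Bmat_nonneg A hnonneg i l)
    (pow_entry_nonneg (Bmat_nonneg A hnonneg) m l r)) ⟨i, Finset.mem_univ i, ?_⟩
  exact mul_pos (lt_of_lt_of_le one_pos (Bmat_diag A hnonneg i)) h

include hnonneg in
lemma Bmat_pow_pos_of_reach {r i : Fin n}
    (h : Relation.ReflTransGen (fun x y => 0 < A y x) r i) :
    ∃ m : ℕ, 0 < (Bmat A ^ m) i r := by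
  induction h with
  | refl => exact ⟨0, by simp [Matrix.one_apply]⟩
  | @tail b c hbc hrel ih =>
    obtain ⟨m, hm⟩ := ih
    refine ⟨m + 1, ?_⟩
    rw [_root_.pow_succ', Matrix.mul_apply]
    refine Finset.sum_pos' (fun l _ => mul_nonneg (Bmat_nonneg A hnonneg c l)
      (pow_entry_nonneg (Bmat_nonneg A hnonneg) m l r)) ⟨b, Finset.mem_univ b, ?_⟩
    refine mul_pos ?_ hm
    by_cases h : c = b
    · subst h; exact lt_of_lt_of_le one_pos (Bmat_diag A hnonneg c)
    · rw [Bmat_offdiag A h]; exact hrel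

include hnonneg in
lemma Bmat_pow_pos_uniform {r : Fin n}
    (h : ∀ i, Relation.ReflTransGen (fun x y => 0 < A y x) r i) :
    ∃ M : ℕ, ∀ i, 0 < (Bmat A ^ M) i r := by
  have hch : ∀ i : Fin n, ∃ m : ℕ, 0 < (Bmat A ^ m) i r :=
    fun i => Bmat_pow_pos_of_reach A hnonneg (h i)
  choose f hf using hch
  refine ⟨Finset.univ.sup f, fun i => ?_⟩
  have hle : f i ≤ Finset.univ.sup f := Finset.le_sup (Finset.mem_univ i)
  have key : ∀ k : ℕ, 0 < (Bmat A ^ (f i + k)) i r := by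
    intro k
    induction k with
    | zero => simpa using hf i
    | succ p ih => rw [← Nat.add_assoc]; exact Bmat_pow_pos_step A hnonneg ih
  have := key (Finset.univ.sup f - f i)
  rwa [Nat.add_sub_cancel' hle] at this

end B

/-! ### The exponential `E t = exp(-tL)` -/

section E
variable (A : Matrix (Fin n) (Fin n) ℝ)

noncomputable def Emat (t : ℝ) : Matrix (Fin n) (Fin n) ℝ :=
  NormedSpace.exp ((-t) • lap A)

variable (hnonneg : ∀ i j, 0 ≤ A i j)

lemma Emat_decomp (t : ℝ) :
    Emat A t = Real.exp (-(t * (1 + ∑ p, ∑ q, A p q))) • NormedSpace.exp (t • Bmat A) := by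
  rw [Emat, exp_neg_decomp (lap A) t (1 + ∑ p, ∑ q, A p q)]
  rfl

include hnonneg in
lemma Emat_entry_nonneg {t : ℝ} (ht : 0 ≤ t) (i j : Fin n) : 0 ≤ Emat A t i j := by
  rw [Emat_decomp]
  have h1 : ∀ p q, 0 ≤ (t • Bmat A) p q := fun p q =>
    mul_nonneg ht (Bmat_nonneg A hnonneg p q)
  have := exp_entry_nonneg h1 i j
  have h2 : (0:ℝ) ≤ Real.exp (-(t * (1 + ∑ p, ∑ q, A p q))) := (Real.exp_pos _).le
  simpa [Matrix.smul_apply] using mul_nonneg h2 this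

lemma Emat_rowsum (t : ℝ) (i : Fin n) : ∑ j, Emat A t i j = 1 := by
  have h : ((-t) • lap A) *ᵥ (fun _ => (1:ℝ)) = 0 := by
    rw [Matrix.smul_mulVec, lap_mulVec_one, smul_zero]
  have h2 := congrFun (exp_mulVec_fixed h) i
  simpa [Matrix.mulVec, dotProduct, Emat] using h2

lemma Emat_semigroup (s t : ℝ) : Emat A (s + t) = Emat A s * Emat A t := by
  rw [Emat, Emat, Emat, ← exp_semigroup]

include hnonneg in
lemma Emat_col_pos {r : Fin n}
    (h : ∀ i, Relation.ReflTransGen (fun x y => 0 < A y x) r i) (i : Fin n) :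
    0 < Emat A 1 i r := by
  obtain ⟨M, hM⟩ := Bmat_pow_pos_uniform A hnonneg h
  rw [Emat_decomp]
  have hone : (1:ℝ) • Bmat A = Bmat A := one_smul _ _
  have h1 : ∀ p q, 0 ≤ (Bmat A) p q := Bmat_nonneg A hnonneg
  have hlow := exp_entry_lower h1 i r M
  have hpos : 0 < ((M ! : ℝ))⁻¹ * (Bmat A ^ M) i r := by
    have : (0:ℝ) < (M ! : ℝ) := by positivity
    exact mul_pos (by positivity) (hM i)
  have : 0 < NormedSpace.exp ((1:ℝ) • Bmat A) i r := by
    rw [hone]; linarith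
  simpa [Matrix.smul_apply] using mul_pos (Real.exp_pos _) this

end E

lemma key_tendsto {n : ℕ} (A : Matrix (Fin n) (Fin n) ℝ) (hnonneg : ∀ i j, 0 ≤ A i j)
    {r : Fin n} (hroot : ∀ i, Relation.ReflTransGen (fun x y => 0 < A y x) r i)
    (x : Fin n → ℝ) :
    ∃ c : ℝ, ∀ i, Tendsto (fun t : ℝ => (Emat A t *ᵥ x) i) atTop (nhds c) := by
  have hne : (Finset.univ : Finset (Fin n)).Nonempty := ⟨r, Finset.mem_univ r⟩
  set δ : ℝ := Finset.univ.inf' hne (fun i => Emat A 1 i r) with hδdef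
  have hδpos : 0 < δ := by
    rw [hδdef, Finset.lt_inf'_iff]
    exact fun i _ => Emat_col_pos A hnonneg hroot i
  have hδle : ∀ i, δ ≤ Emat A 1 i r := fun i => Finset.inf'_le _ (Finset.mem_univ i)
  have hδ1 : δ ≤ 1 := by
    refine le_trans (hδle r) ?_
    calc Emat A 1 r r ≤ ∑ j, Emat A 1 r j :=
          Finset.single_le_sum (fun j _ => Emat_entry_nonneg A hnonneg zero_le_one r j)
            (Finset.mem_univ r)
      _ = 1 := Emat_rowsum A 1 r
  set y : ℕ → Fin n → ℝ := fun m => Emat A m *ᵥ x with hy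
  set a : ℕ → ℝ := fun m => Finset.univ.sup' hne (y m) with ha
  set b : ℕ → ℝ := fun m => Finset.univ.inf' hne (y m) with hb
  have hya : ∀ m j, y m j ≤ a m := fun m j => Finset.le_sup' (y m) (Finset.mem_univ j)
  have hyb : ∀ m j, b m ≤ y m j := fun m j => Finset.inf'_le (y m) (Finset.mem_univ j)
  have hab : ∀ m, b m ≤ a m := fun m => le_trans (hyb m r) (hya m r)
  have hy_succ : ∀ m : ℕ, y (m+1) = Emat A 1 *ᵥ y m := by
    intro m
    simp only [hy]
    rw [show ((m+1 : ℕ):ℝ) = (1:ℝ) + (m:ℝ) by push_cast; ring, Emat_semigroup,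
      ← Matrix.mulVec_mulVec]
  have hcontr : ∀ m : ℕ, a (m+1) ≤ δ * y m r + (1-δ) * a m ∧
      δ * y m r + (1-δ) * b m ≤ b (m+1) := by
    intro m
    constructor
    · simp only [ha, hy_succ m]
      refine Finset.sup'_le hne _ fun i _ => ?_
      exact (contraction_bounds (Emat_entry_nonneg A hnonneg zero_le_one)
        (Emat_rowsum A 1) hδle (hyb m) (hya m) i).1
    · simp only [hb, hy_succ m]
      refine Finset.le_inf' hne _ fun i _ => ?_
      exact (contraction_bounds (Emat_entry_nonneg A hnonneg zero_le_one)
        (Emat_rowsum A 1) hδle (hyb m) (hya m) i).2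
  have hA : Antitone a := by
    refine antitone_nat_of_succ_le fun m => ?_
    have h1 := (hcontr m).1
    have h2 := hya m r
    nlinarith [hδpos.le]
  have hBmono : Monotone b := by
    refine monotone_nat_of_le_succ fun m => ?_
    have h1 := (hcontr m).2
    have h2 := hyb m r
    nlinarith [hδpos.le]
  have hgap : ∀ m : ℕ, a m - b m ≤ (1-δ)^m * (a 0 - b 0) := by
    intro m
    induction m with
    | zero => simp
    | succ p ih =>
      have h1 := (hcontr p).1
      have h2 := (hcontr p).2
      have h3 : a (p+1) - b (p+1) ≤ (1-δ) * (a p - b p) := by linarith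
      calc a (p+1) - b (p+1) ≤ (1-δ) * (a p - b p) := h3
        _ ≤ (1-δ) * ((1-δ)^p * (a 0 - b 0)) :=
            mul_le_mul_of_nonneg_left ih (by linarith)
        _ = (1-δ)^(p+1) * (a 0 - b 0) := by ring
  have hbb : BddBelow (Set.range a) := by
    refine ⟨b 0, fun z hz => ?_⟩
    obtain ⟨m, rfl⟩ := hz
    exact le_trans (hBmono (Nat.zero_le m)) (hab m)
  set c : ℝ := ⨅ m, a m with hc
  have hac : Tendsto a atTop (nhds c) := tendsto_atTop_ciInf hA hbb
  have hgap0 : Tendsto (fun m => a m - b m) atTop (nhds 0) := by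
    have hg : Tendsto (fun m : ℕ => (1-δ)^m * (a 0 - b 0)) atTop (nhds 0) := by
      have := (tendsto_pow_atTop_nhds_zero_of_lt_one (by linarith : (0:ℝ) ≤ 1-δ)
        (by linarith : (1:ℝ)-δ < 1)).mul_const (a 0 - b 0)
      simpa using this
    exact squeeze_zero (fun m => by linarith [hab m]) hgap hg
  have hbc : Tendsto b atTop (nhds c) := by
    have := hac.sub hgap0
    simpa using this
  have hblec : ∀ m, b m ≤ c := fun m => Monotone.ge_of_tendsto hBmono hbc m
  have halec : ∀ m, c ≤ a m := fun m => ciInf_le hbb m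
  refine ⟨c, fun i => ?_⟩
  have hsand : ∀ t : ℝ, 0 ≤ t → b ⌊t⌋₊ ≤ (Emat A t *ᵥ x) i ∧ (Emat A t *ᵥ x) i ≤ a ⌊t⌋₊ := by
    intro t ht
    have hs : 0 ≤ t - (⌊t⌋₊ : ℝ) := by
      have := Nat.floor_le ht
      linarith
    have hsplit : Emat A t = Emat A (t - ⌊t⌋₊) * Emat A ⌊t⌋₊ := by
      rw [← Emat_semigroup]
      ring_nf
    have heq : (Emat A t *ᵥ x) i = (Emat A (t - ⌊t⌋₊) *ᵥ y ⌊t⌋₊) i := by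
      rw [hsplit, ← Matrix.mulVec_mulVec]
    rw [heq]
    exact ⟨mulVec_ge_of_row (Emat_entry_nonneg A hnonneg hs)
        (Emat_rowsum A _) (hyb ⌊t⌋₊) i,
      mulVec_le_of_row (Emat_entry_nonneg A hnonneg hs)
        (Emat_rowsum A _) (hya ⌊t⌋₊) i⟩
  have hfl : Tendsto (fun t : ℝ => ⌊t⌋₊) atTop atTop := tendsto_nat_floor_atTop
  refine tendsto_of_tendsto_of_tendsto_of_le_of_le' (hbc.comp hfl) (hac.comp hfl)
    ?_ ?_
  · exact (eventually_ge_atTop (0:ℝ)).mono fun t ht => (hsand t ht).1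
  · exact (eventually_ge_atTop (0:ℝ)).mono fun t ht => (hsand t ht).2

lemma nu_vecMul_lap {n : ℕ} (A : Matrix (Fin n) (Fin n) ℝ) (ν : Fin n → ℝ)
    (hν0 : ∀ i, 0 ≤ ν i) (hν1 : ∑ i, ν i = 1)
    (hfix : ∀ s : ℝ, ν ᵥ* Emat A s = ν) : ν ᵥ* lap A = 0 := by
  set L := lap A with hL
  set K : ℝ := 1 + ∑ p, ∑ q, |L p q| with hK
  have hKnn : 0 ≤ ∑ p, ∑ q, |L p q| :=
    Finset.sum_nonneg fun p _ => Finset.sum_nonneg fun q _ => abs_nonneg _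
  have hK1 : (1:ℝ) ≤ K := by rw [hK]; linarith
  have hK0 : (0:ℝ) ≤ K := by linarith
  set C : ℝ := ∑' k : ℕ, K^2 * (K^k / k !) with hC
  have hCsummand : Summable (fun k : ℕ => K^2 * (K^k / k !)) :=
    (Real.summable_pow_div_factorial K).mul_left _
  have hC0 : 0 ≤ C := tsum_nonneg fun k => by positivity
  have hwk : ∀ (k : ℕ) (j : Fin n), |(ν ᵥ* (L^k)) j| ≤ K^k := by
    intro k j
    have h1 : (ν ᵥ* (L^k)) j = ∑ i, ν i * (L^k) i j := by
      simp [Matrix.vecMul, dotProduct]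
    rw [h1]
    calc |∑ i, ν i * (L^k) i j| ≤ ∑ i, |ν i * (L^k) i j| := Finset.abs_sum_le_sum_abs _ _
      _ ≤ ∑ i, ν i * K^k := by
          refine Finset.sum_le_sum fun i _ => ?_
          rw [abs_mul, abs_of_nonneg (hν0 i)]
          exact mul_le_mul_of_nonneg_left (pow_entry_bound L k i j) (hν0 i)
      _ = K^k := by rw [← Finset.sum_mul, hν1, one_mul]
  funext j
  simp only [Pi.zero_apply]
  have key : ∀ s : ℝ, 0 < s → s ≤ 1 → |(ν ᵥ* L) j| ≤ s * C := by
    intro s hs hs1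
    set g : ℕ → ℝ := fun k => ((k ! : ℝ))⁻¹ * (-s)^k * ((ν ᵥ* (L^k)) j) with hg
    have hgsum : HasSum g (ν j) := by
      have h1 : ∀ i : Fin n, HasSum (fun k : ℕ => ν i * (((k ! : ℝ))⁻¹ * (((-s) • L)^k) i j))
          (ν i * Emat A s i j) := fun i => (expEntryHasSum ((-s) • L) i j).mul_left (ν i)
      have h2 : HasSum (fun k : ℕ => ∑ i, ν i * (((k ! : ℝ))⁻¹ * (((-s) • L)^k) i j))
          (∑ i, ν i * Emat A s i j) := hasSum_sum fun i _ => h1 i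
      have h3 : (∑ i, ν i * Emat A s i j) = ν j := by
        have := congrFun (hfix s) j
        simpa [Matrix.vecMul, dotProduct] using this
      have h4 : ∀ k : ℕ, (∑ i, ν i * (((k ! : ℝ))⁻¹ * (((-s) • L)^k) i j)) = g k := by
        intro k
        have h5 : ∀ i : Fin n, (((-s) • L)^k) i j = (-s)^k * (L^k) i j := by
          intro i; rw [smul_pow]; simp
        calc ∑ i, ν i * (((k ! : ℝ))⁻¹ * (((-s) • L)^k) i j)
            = ∑ i, ((k ! : ℝ))⁻¹ * (-s)^k * (ν i * (L^k) i j) := by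
              refine Finset.sum_congr rfl fun i _ => ?_
              rw [h5 i]; ring
          _ = ((k ! : ℝ))⁻¹ * (-s)^k * ∑ i, ν i * (L^k) i j := by rw [← Finset.mul_sum]
          _ = g k := by
              rw [hg]
              simp [Matrix.vecMul, dotProduct]
      rw [← h3]
      have h2' := h2
      simp_rw [h4] at h2'
      exact h2'
    have hgsummable : Summable g := hgsum.summable
    have hg0 : g 0 = ν j := by simp [hg, Matrix.vecMul_one]
    have htail1 : ∑' k, g (k+1) = 0 := by
      have h := Summable.tsum_eq_zero_add hgsummable
      rw [hgsum.tsum_eq, hg0] at h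
      linarith
    have hgsummable1 : Summable fun k => g (k+1) := (summable_nat_add_iff 1).mpr hgsummable
    have htail2 : ∑' k, g (k+1) = g 1 + ∑' k, g (k+2) := Summable.tsum_eq_zero_add hgsummable1
    have hg1 : g 1 = -s * ((ν ᵥ* L) j) := by simp [hg]
    have hgsummable2 : Summable fun k => g (k+2) := (summable_nat_add_iff 2).mpr hgsummable
    have hbound : ∀ k : ℕ, |g (k+2)| ≤ s^2 * (K^2 * (K^k / k !)) := by
      intro k
      have h1 : |g (k+2)| ≤ (((k+2)! : ℝ))⁻¹ * s^(k+2) * K^(k+2) := by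
        rw [hg]
        simp only []
        rw [abs_mul, abs_mul]
        have e1 : |(((k+2)! : ℝ))⁻¹| = (((k+2)! : ℝ))⁻¹ := abs_of_nonneg (by positivity)
        have e2 : |(-s)^(k+2)| = s^(k+2) := by rw [abs_pow, abs_neg, abs_of_nonneg hs.le]
        rw [e1, e2]
        exact mul_le_mul_of_nonneg_left (hwk (k+2) j) (by positivity)
      refine h1.trans ?_
      have h2 : (((k+2)! : ℝ))⁻¹ ≤ ((k ! : ℝ))⁻¹ := by
        apply inv_anti₀ (by positivity)
        exact_mod_cast Nat.factorial_le (by omega)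
      have h3 : s^(k+2) ≤ s^2 := by
        calc s^(k+2) = s^2 * s^k := by ring
          _ ≤ s^2 * 1 := mul_le_mul_of_nonneg_left (pow_le_one₀ hs.le hs1) (by positivity)
          _ = s^2 := mul_one _
      have h4 : (0:ℝ) < (k ! : ℝ) := by positivity
      calc (((k+2)! : ℝ))⁻¹ * s^(k+2) * K^(k+2)
          ≤ ((k ! : ℝ))⁻¹ * s^2 * K^(k+2) := by
            refine mul_le_mul_of_nonneg_right
              (mul_le_mul h2 h3 (by positivity) (by positivity)) (by positivity)
        _ = s^2 * (K^2 * (K^k / k !)) := by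
            field_simp
            ring
    have habs_summable : Summable fun k => |g (k+2)| :=
      Summable.of_nonneg_of_le (fun k => abs_nonneg _) hbound (hCsummand.mul_left (s^2))
    have hT : |∑' k, g (k+2)| ≤ s^2 * C := by
      calc |∑' k, g (k+2)| ≤ ∑' k, |g (k+2)| := by
            simpa [Real.norm_eq_abs] using norm_tsum_le_tsum_norm (f := fun k => g (k+2))
              (by simpa [Real.norm_eq_abs] using habs_summable)
        _ ≤ ∑' k, s^2 * (K^2 * (K^k / k !)) :=
            Summable.tsum_le_tsum hbound habs_summable (hCsummand.mul_left (s^2))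
        _ = s^2 * C := by rw [hC, tsum_mul_left]
    have heq : -s * ((ν ᵥ* L) j) + ∑' k, g (k+2) = 0 := by
      rw [← hg1, ← htail2]; exact htail1
    have heq2 : s * |(ν ᵥ* L) j| = |∑' k, g (k+2)| := by
      rw [show ∑' k, g (k+2) = s * ((ν ᵥ* L) j) by linarith, abs_mul, abs_of_nonneg hs.le]
    nlinarith [hT, heq2, hs]
  have hnonposabs : |(ν ᵥ* L) j| ≤ 0 := by
    refine le_of_forall_pos_le_add fun ε hε => ?_
    have hCp : (0:ℝ) < C + 1 := by linarith
    set s : ℝ := min 1 (ε / (C+1)) with hsdef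
    have hs0 : 0 < s := lt_min one_pos (by positivity)
    have hs1 : s ≤ 1 := min_le_left _ _
    have h := key s hs0 hs1
    have h2 : s * C ≤ ε := by
      calc s * C ≤ (ε / (C+1)) * C :=
            mul_le_mul_of_nonneg_right (min_le_right _ _) hC0
        _ ≤ (ε / (C+1)) * (C+1) := by
            refine mul_le_mul_of_nonneg_left (by linarith) (by positivity)
        _ = ε := by field_simp
    linarith
  have := abs_nonneg ((ν ᵥ* L) j)
  have : |(ν ᵥ* L) j| = 0 := le_antisymm hnonposabs this
  exact abs_eq_zero.mp this
lemma backward_dir {n : ℕ} (A : Matrix (Fin n) (Fin n) ℝ) (hnonneg : ∀ i j, 0 ≤ A i j)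
    {r : Fin n} (hroot : ∀ i, Relation.ReflTransGen (fun x y => 0 < A y x) r i) :
    ∃ ν : Fin n → ℝ, (∀ i, 0 ≤ ν i) ∧ (∑ i, ν i) = 1 ∧ ν ᵥ* lap A = 0 ∧
      Tendsto (fun t : ℝ => Emat A t) atTop (nhds (Matrix.of fun _ j => ν j)) := by
  have hch : ∀ j : Fin n, ∃ c : ℝ, ∀ i,
      Tendsto (fun t : ℝ => (Emat A t *ᵥ Pi.single j 1) i) atTop (nhds c) :=
    fun j => key_tendsto A hnonneg hroot (Pi.single j 1)
  choose ν hν using hch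
  have hentry : ∀ i j : Fin n, Tendsto (fun t : ℝ => Emat A t i j) atTop (nhds (ν j)) := by
    intro i j
    have h := hν j i
    have heq : (fun t : ℝ => (Emat A t *ᵥ Pi.single j 1) i) = fun t : ℝ => Emat A t i j := by
      funext t
      simp [Matrix.mulVec, dotProduct, Pi.single_apply]
    rwa [heq] at h
  refine ⟨ν, ?_, ?_, ?_, ?_⟩
  · intro j
    refine ge_of_tendsto (hentry r j) ?_
    exact (eventually_ge_atTop (0:ℝ)).mono fun t ht => Emat_entry_nonneg A hnonneg ht r j
  · have h1 : Tendsto (fun t : ℝ => ∑ j, Emat A t r j) atTop (nhds (∑ j, ν j)) :=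
      tendsto_finset_sum _ fun j _ => hentry r j
    have h2 : (fun t : ℝ => ∑ j, Emat A t r j) = fun _ => (1:ℝ) := by
      funext t; exact Emat_rowsum A t r
    rw [h2] at h1
    exact tendsto_nhds_unique h1 tendsto_const_nhds
  · refine nu_vecMul_lap A ν ?_ ?_ ?_
    · intro j
      refine ge_of_tendsto (hentry r j) ?_
      exact (eventually_ge_atTop (0:ℝ)).mono fun t ht => Emat_entry_nonneg A hnonneg ht r j
    · have h1 : Tendsto (fun t : ℝ => ∑ j, Emat A t r j) atTop (nhds (∑ j, ν j)) :=
        tendsto_finset_sum _ fun j _ => hentry r j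
      have h2 : (fun t : ℝ => ∑ j, Emat A t r j) = fun _ => (1:ℝ) := by
        funext t; exact Emat_rowsum A t r
      rw [h2] at h1
      exact tendsto_nhds_unique h1 tendsto_const_nhds
    · intro s
      funext j
      have h1 : Tendsto (fun t : ℝ => Emat A (t+s) r j) atTop (nhds (ν j)) := by
        have := (hentry r j).comp (tendsto_atTop_add_const_right atTop s tendsto_id)
        exact this
      have h2 : (fun t : ℝ => Emat A (t+s) r j) =
          fun t : ℝ => ∑ l, Emat A t r l * Emat A s l j := by
        funext t
        rw [Emat_semigroup A t s, Matrix.mul_apply]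
      rw [h2] at h1
      have h3 : Tendsto (fun t : ℝ => ∑ l, Emat A t r l * Emat A s l j) atTop
          (nhds (∑ l, ν l * Emat A s l j)) :=
        tendsto_finset_sum _ fun l _ => (hentry r l).mul_const _
      have h4 := tendsto_nhds_unique h3 h1
      have h5 : (ν ᵥ* Emat A s) j = ∑ l, ν l * Emat A s l j := by
        simp [Matrix.vecMul, dotProduct]
      rw [h5, h4]
  · refine tendsto_pi_nhds.mpr ?_
    intro i
    rw [tendsto_pi_nhds]
    intro j
    exact hentry i j

section Forward
variable {n : ℕ} (A : Matrix (Fin n) (Fin n) ℝ)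

def IsClosedSet (C : Finset (Fin n)) : Prop := ∀ i ∈ C, ∀ j, 0 < A i j → j ∈ C

lemma exists_minimal_closed : ∀ C : Finset (Fin n), IsClosedSet A C → C.Nonempty →
    ∃ M ⊆ C, IsClosedSet A M ∧ M.Nonempty ∧
      ∀ M' ⊆ M, IsClosedSet A M' → M'.Nonempty → M' = M := by
  intro C
  induction C using Finset.strongInductionOn with
  | _ C ih =>
    intro hC hne
    by_cases h : ∃ M', M' ⊂ C ∧ IsClosedSet A M' ∧ M'.Nonempty
    · obtain ⟨M', hsub, hcl, hne'⟩ := h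
      obtain ⟨M, hMsub, hrest⟩ := ih M' hsub hcl hne'
      exact ⟨M, hMsub.trans hsub.subset, hrest⟩
    · push_neg at h
      refine ⟨C, Finset.Subset.refl C, hC, hne, fun M' hsub hcl hne' => ?_⟩
      by_contra hne2
      exact hne'.ne_empty (h M' (lt_of_le_of_ne hsub hne2) hcl)

noncomputable def Sset (i : Fin n) : Finset (Fin n) :=
  @Finset.filter _ (fun x => Relation.ReflTransGen (fun a b => 0 < A b a) x i)
    (Classical.decPred _) Finset.univ

lemma mem_Sset {i x : Fin n} :
    x ∈ Sset A i ↔ Relation.ReflTransGen (fun a b => 0 < A b a) x i := by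
  simp [Sset]

lemma Sset_closed (i : Fin n) : IsClosedSet A (Sset A i) := by
  intro p hp q hq
  rw [mem_Sset] at hp ⊢
  exact Relation.ReflTransGen.head hq hp

lemma no_root_disjoint (hn : 0 < n)
    (hnroot : ¬ ∃ r : Fin n, ∀ i, Relation.ReflTransGen (fun a b => 0 < A b a) r i) :
    ∃ C₁ C₂ : Finset (Fin n), IsClosedSet A C₁ ∧ IsClosedSet A C₂ ∧
      C₁.Nonempty ∧ C₂.Nonempty ∧ ∀ j, j ∉ C₁ ∨ j ∉ C₂ := by
  push_neg at hnroot
  have huniv : IsClosedSet A (Finset.univ : Finset (Fin n)) := fun i _ j _ => Finset.mem_univ j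
  obtain ⟨M, _, hMcl, hMne, hMmin⟩ := exists_minimal_closed A Finset.univ huniv
    ⟨⟨0, hn⟩, Finset.mem_univ _⟩
  obtain ⟨x₀, hx₀⟩ := hMne
  obtain ⟨i₁, hi₁⟩ := hnroot x₀
  have hreach : ∀ z ∈ M, Relation.ReflTransGen (fun a b => 0 < A b a) x₀ z := by
    intro z hz
    set M' : Finset (Fin n) := M ∩ Sset A z with hM'
    have hM'cl : IsClosedSet A M' := by
      intro p hp q hq
      rw [hM', Finset.mem_inter] at hp ⊢
      exact ⟨hMcl p hp.1 q hq, Sset_closed A z p hp.2 q hq⟩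
    have hM'ne : M'.Nonempty :=
      ⟨z, Finset.mem_inter.mpr ⟨hz, (mem_Sset A).mpr Relation.ReflTransGen.refl⟩⟩
    have := hMmin M' (Finset.inter_subset_left) hM'cl hM'ne
    have hx₀' : x₀ ∈ M' := this ▸ hx₀
    exact (mem_Sset A).mp (Finset.mem_inter.mp hx₀').2
  refine ⟨M, Sset A i₁, hMcl, Sset_closed A i₁, ⟨x₀, hx₀⟩,
    ⟨i₁, (mem_Sset A).mpr Relation.ReflTransGen.refl⟩, fun j => ?_⟩
  by_contra hcon
  push_neg at hcon
  obtain ⟨hj1, hj2⟩ := hcon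
  exact hi₁ ((hreach j hj1).trans ((mem_Sset A).mp hj2))

lemma closed_exp_zero (hnonneg : ∀ i j, 0 ≤ A i j) {C : Finset (Fin n)}
    (hCcl : IsClosedSet A C) {i j : Fin n} (hi : i ∈ C) (hj : j ∉ C) (t : ℝ) :
    Emat A t i j = 0 := by
  have hij : ∀ p q : Fin n, p ∈ C → q ∉ C → p ≠ q := by
    rintro p q hp hq rfl; exact hq hp
  have hLzero : ∀ p ∈ C, ∀ q ∉ C, lap A p q = 0 := by
    intro p hp q hq
    have hpq : p ≠ q := hij p q hp hq
    have : lap A p q = -A p q := by simp [lap, hpq]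
    rw [this, neg_eq_zero]
    rcases lt_or_eq_of_le (hnonneg p q) with h | h
    · exact absurd (hCcl p hp q h) hq
    · exact h.symm
  set X := (-t) • lap A with hX
  have hXzero : ∀ p ∈ C, ∀ q ∉ C, X p q = 0 := by
    intro p hp q hq
    rw [hX, Matrix.smul_apply, hLzero p hp q hq, smul_zero]
  have hpow : ∀ k : ℕ, ∀ p ∈ C, ∀ q ∉ C, (X ^ k) p q = 0 := by
    intro k
    induction k with
    | zero =>
      intro p hp q hq
      rw [pow_zero]
      exact Matrix.one_apply_ne (hij p q hp hq)
    | succ m ih =>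
      intro p hp q hq
      rw [pow_succ, Matrix.mul_apply]
      refine Finset.sum_eq_zero fun l _ => ?_
      by_cases hl : l ∈ C
      · rw [hXzero l hl q hq, mul_zero]
      · rw [ih p hp l hl, zero_mul]
  have h1 := expEntryHasSum X i j
  have h2 : (fun k : ℕ => ((k ! : ℝ))⁻¹ * (X ^ k) i j) = fun _ => (0:ℝ) := by
    funext k
    rw [hpow k i hi j hj, mul_zero]
  rw [h2] at h1
  exact (h1.unique hasSum_zero)

lemma forward_dir (hnonneg : ∀ i j, 0 ≤ A i j) (ν : Fin n → ℝ) (hν1 : (∑ i, ν i) = 1)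
    (htends : Tendsto (fun t : ℝ => Emat A t) atTop (nhds (Matrix.of fun _ j => ν j))) :
    ∃ r : Fin n, ∀ i : Fin n, Relation.ReflTransGen (fun x y => 0 < A y x) r i := by
  by_contra hnroot
  rcases Nat.eq_zero_or_pos n with h0 | hn
  · subst h0
    simp at hν1
  obtain ⟨C₁, C₂, hC₁cl, hC₂cl, ⟨x₁, hx₁⟩, ⟨x₂, hx₂⟩, hdisj⟩ :=
    no_root_disjoint A hn hnroot
  have hent : ∀ i j : Fin n, Tendsto (fun t : ℝ => Emat A t i j) atTop (nhds (ν j)) := by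
    intro i j
    have h1 := tendsto_pi_nhds.mp htends i
    have h2 := tendsto_pi_nhds.mp h1 j
    simpa using h2
  have hzero : ∀ j, ν j = 0 := by
    intro j
    rcases hdisj j with hj | hj
    · have h1 : (fun t : ℝ => Emat A t x₁ j) = fun _ => (0:ℝ) := by
        funext t; exact closed_exp_zero A hnonneg hC₁cl hx₁ hj t
      have h2 := hent x₁ j
      rw [h1] at h2
      exact tendsto_nhds_unique h2 tendsto_const_nhds
    · have h1 : (fun t : ℝ => Emat A t x₂ j) = fun _ => (0:ℝ) := by
        funext t; exact closed_exp_zero A hnonneg hC₂cl hx₂ hj t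
      have h2 := hent x₂ j
      rw [h1] at h2
      exact tendsto_nhds_unique h2 tendsto_const_nhds
  rw [Finset.sum_congr rfl (fun j _ => hzero j)] at hν1
  simp at hν1

end Forward

end Aux

/-- `exp(-tL)` converges, as `t → ∞`, to a rank-one matrix `1·νᵀ` with `ν ≥ 0`,
`νᵀ1 = 1` and `νᵀL = 0` if and only if the associated directed graph (edge from `j` to
`i` whenever `a_ij > 0`) has a directed spanning tree.  In particular, under this
condition every solution `X(t) = exp(-tL) x₀` reaches consensus:
`Xᵢ(t) - Xⱼ(t) → 0` for all `i, j`, with common limit `νᵀx₀`. -/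
theorem exp_neg_laplacian_tendsto_rank_one_iff_spanning_tree
    {n : ℕ} (A : Matrix (Fin n) (Fin n) ℝ)
    (hnonneg : ∀ i j, 0 ≤ A i j) (hdiag : ∀ i, A i i = 0) :
    ((∃ ν : Fin n → ℝ, (∀ i, 0 ≤ ν i) ∧ (∑ i, ν i) = 1 ∧ ν ᵥ* lap A = 0 ∧
        Tendsto (fun t : ℝ => NormedSpace.exp ((-t) • lap A)) atTop
          (nhds (Matrix.of fun _ j => ν j))) ↔
      (∃ r : Fin n, ∀ i : Fin n,
        Relation.ReflTransGen (fun x y => 0 < A y x) r i)) ∧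
    (∀ ν : Fin n → ℝ, (∀ i, 0 ≤ ν i) → (∑ i, ν i) = 1 → ν ᵥ* lap A = 0 →
      Tendsto (fun t : ℝ => NormedSpace.exp ((-t) • lap A)) atTop
        (nhds (Matrix.of fun _ j => ν j)) →
      ∀ x₀ : Fin n → ℝ,
        (∀ i j : Fin n, Tendsto
          (fun t : ℝ => (NormedSpace.exp ((-t) • lap A) *ᵥ x₀) i -
            (NormedSpace.exp ((-t) • lap A) *ᵥ x₀) j) atTop (nhds 0)) ∧
        (∀ i : Fin n, Tendsto
          (fun t : ℝ => (NormedSpace.exp ((-t) • lap A) *ᵥ x₀) i) atTop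
          (nhds (ν ⬝ᵥ x₀)))) := by
  constructor
  · constructor
    · rintro ⟨ν, hν0, hν1, hνL, htends⟩
      exact forward_dir A hnonneg ν hν1 htends
    · rintro ⟨r, hr⟩
      exact backward_dir A hnonneg hr
  · intro ν hν0 hν1 hνL htends x₀
    have hent : ∀ i j : Fin n, Tendsto (fun t : ℝ => Emat A t i j) atTop (nhds (ν j)) := by
      intro i j
      have h1 := tendsto_pi_nhds.mp htends i
      have h2 := tendsto_pi_nhds.mp h1 j
      exact h2
    have hlim : ∀ i : Fin n, Tendsto (fun t : ℝ => (Emat A t *ᵥ x₀) i) atTop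
        (nhds (ν ⬝ᵥ x₀)) := by
      intro i
      have h1 : Tendsto (fun t : ℝ => ∑ j, Emat A t i j * x₀ j) atTop
          (nhds (∑ j, ν j * x₀ j)) :=
        tendsto_finset_sum _ fun j _ => (hent i j).mul_const (x₀ j)
      have h2 : (fun t : ℝ => (Emat A t *ᵥ x₀) i) =
          fun t : ℝ => ∑ j, Emat A t i j * x₀ j := by
        funext t; simp [Matrix.mulVec, dotProduct]
      have h3 : ν ⬝ᵥ x₀ = ∑ j, ν j * x₀ j := by simp [dotProduct]
      rw [h2, h3]
      exact h1
    constructor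
    · intro i j
      have h := (hlim i).sub (hlim j)
      rw [sub_self] at h
      exact h
    · exact hlim
end

section
/- Let P ∈ ℝ^{n×n} be a row-stochastic matrix whose diagonal entries are all positive, and suppose the directed graph with an edge from j to i whenever p_ij > 0 (i ≠ j) has a directed spanning tree. Then P is SIA: lim_{k→∞} P^k = 1·yᵀ for some vector y ∈ ℝ^n with y entrywise nonnegative and yᵀ1 = 1. Consequently, for every x₀ ∈ ℝ^n the iterates P^k x₀ converge to the consensus vector (yᵀx₀)·1. -/
open Matrix Finset Filter

/-- Entrywise formula for mulVec. -/
private lemma mv_apply {n : ℕ} (A : Matrix (Fin n) (Fin n) ℝ) (x : Fin n → ℝ) (i : Fin n) :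
    (A *ᵥ x) i = ∑ j, A i j * x j := rfl

/-- Stochastic matrix maps vectors bounded above by S to vectors bounded above by S. -/
private lemma mv_le {n : ℕ} (A : Matrix (Fin n) (Fin n) ℝ)
    (h0 : ∀ i j, 0 ≤ A i j) (h1 : ∀ i, ∑ j, A i j = 1)
    (x : Fin n → ℝ) (S : ℝ) (hS : ∀ j, x j ≤ S) (i : Fin n) :
    (A *ᵥ x) i ≤ S := by
  rw [mv_apply]
  calc ∑ j, A i j * x j ≤ ∑ j, A i j * S :=
        Finset.sum_le_sum fun j _ => mul_le_mul_of_nonneg_left (hS j) (h0 i j)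
    _ = S := by rw [← Finset.sum_mul, h1 i, one_mul]

private lemma le_mv {n : ℕ} (A : Matrix (Fin n) (Fin n) ℝ)
    (h0 : ∀ i j, 0 ≤ A i j) (h1 : ∀ i, ∑ j, A i j = 1)
    (x : Fin n → ℝ) (I : ℝ) (hI : ∀ j, I ≤ x j) (i : Fin n) :
    I ≤ (A *ᵥ x) i := by
  rw [mv_apply]
  calc I = ∑ j, A i j * I := by rw [← Finset.sum_mul, h1 i, one_mul]
    _ ≤ ∑ j, A i j * x j :=
        Finset.sum_le_sum fun j _ => mul_le_mul_of_nonneg_left (hI j) (h0 i j)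

/-- Contraction upper bound: if every entry of column `r` is at least `δ`. -/
private lemma mv_upper {n : ℕ} (A : Matrix (Fin n) (Fin n) ℝ)
    (h0 : ∀ i j, 0 ≤ A i j) (h1 : ∀ i, ∑ j, A i j = 1)
    (r : Fin n) (δ : ℝ) (hδ : ∀ i, δ ≤ A i r)
    (x : Fin n → ℝ) (S : ℝ) (hS : ∀ j, x j ≤ S) (i : Fin n) :
    (A *ᵥ x) i ≤ δ * x r + (1 - δ) * S := by
  have hsplit : ∑ j, A i j * x j
      = δ * x r + ∑ j, (A i j - if j = r then δ else 0) * x j := by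
    have : ∑ j, (A i j - if j = r then δ else 0) * x j
        = ∑ j, A i j * x j - ∑ j, (if j = r then δ else 0) * x j := by
      rw [← Finset.sum_sub_distrib]; congr 1; ext j; ring
    rw [this]
    have : ∑ j, (if j = r then δ else 0) * x j = δ * x r := by
      rw [Finset.sum_eq_single r]
      · simp
      · intro b _ hb; simp [hb]
      · intro h; exact absurd (Finset.mem_univ r) h
    rw [this]; ring
  have hcoef : ∀ j, 0 ≤ A i j - if j = r then δ else 0 := by
    intro j
    by_cases hj : j = r
    · subst hj; simp [sub_nonneg, hδ i]
    · simp [hj, h0 i j]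
  have hsum : ∑ j, (A i j - if j = r then δ else 0) = 1 - δ := by
    rw [Finset.sum_sub_distrib, h1 i]
    congr 1
    rw [Finset.sum_eq_single r]
    · simp
    · intro b _ hb; simp [hb]
    · intro h; exact absurd (Finset.mem_univ r) h
  rw [mv_apply, hsplit]
  have : ∑ j, (A i j - if j = r then δ else 0) * x j ≤ (1 - δ) * S := by
    calc ∑ j, (A i j - if j = r then δ else 0) * x j
        ≤ ∑ j, (A i j - if j = r then δ else 0) * S :=
          Finset.sum_le_sum fun j _ => mul_le_mul_of_nonneg_left (hS j) (hcoef j)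
      _ = (1 - δ) * S := by rw [← Finset.sum_mul, hsum]
  linarith

private lemma mv_lower {n : ℕ} (A : Matrix (Fin n) (Fin n) ℝ)
    (h0 : ∀ i j, 0 ≤ A i j) (h1 : ∀ i, ∑ j, A i j = 1)
    (r : Fin n) (δ : ℝ) (hδ : ∀ i, δ ≤ A i r)
    (x : Fin n → ℝ) (I : ℝ) (hI : ∀ j, I ≤ x j) (i : Fin n) :
    δ * x r + (1 - δ) * I ≤ (A *ᵥ x) i := by
  have h := mv_upper A h0 h1 r δ hδ (fun j => -x j) (-I) (fun j => neg_le_neg (hI j)) i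
  have hneg : (A *ᵥ fun j => -x j) i = -((A *ᵥ x) i) := by
    rw [mv_apply, mv_apply, ← Finset.sum_neg_distrib]
    congr 1; ext j; ring
  rw [hneg] at h
  linarith

/-- A row-stochastic matrix `P` with positive diagonal entries whose associated directed
graph (edge from `j` to `i` whenever `p_ij > 0`, `i ≠ j`) has a directed spanning tree
is SIA: `P^k → 1·yᵀ` for some entrywise nonnegative `y` with `yᵀ1 = 1`.  Consequently,
for every `x₀` the iterates `P^k x₀` converge to the consensus vector `(yᵀx₀)·1`. -/
theorem stochastic_positive_diagonal_spanning_tree_is_SIA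
    {n : ℕ} (P : Matrix (Fin n) (Fin n) ℝ)
    (hnonneg : ∀ i j, 0 ≤ P i j) (hrow : ∀ i, ∑ j, P i j = 1)
    (hdiag : ∀ i, 0 < P i i)
    (htree : ∃ r : Fin n, ∀ i : Fin n,
      Relation.ReflTransGen (fun x y => x ≠ y ∧ 0 < P y x) r i) :
    ∃ y : Fin n → ℝ, (∀ i, 0 ≤ y i) ∧ (∑ i, y i) = 1 ∧
      Tendsto (fun k : ℕ => P ^ k) atTop (nhds (Matrix.of fun _ j => y j)) ∧
      ∀ x₀ : Fin n → ℝ,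
        Tendsto (fun k : ℕ => (P ^ k) *ᵥ x₀) atTop (nhds fun _ => y ⬝ᵥ x₀) := by
  obtain ⟨r, hr⟩ := htree
  haveI : Nonempty (Fin n) := ⟨r⟩
  -- powers are stochastic
  have hp0 : ∀ k, ∀ i j, 0 ≤ (P ^ k) i j := by
    intro k
    induction k with
    | zero => intro i j; simp [Matrix.one_apply]; positivity
    | succ k ih =>
        intro i j
        rw [pow_succ, Matrix.mul_apply]
        exact Finset.sum_nonneg fun l _ => mul_nonneg (ih i l) (hnonneg l j)
  have hp1 : ∀ k, ∀ i, ∑ j, (P ^ k) i j = 1 := by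
    intro k
    induction k with
    | zero => intro i; simp [Matrix.one_apply]
    | succ k ih =>
        intro i
        rw [pow_succ]
        simp only [Matrix.mul_apply]
        rw [Finset.sum_comm]
        calc ∑ l, ∑ j, (P ^ k) i l * P l j
            = ∑ l, (P ^ k) i l * ∑ j, P l j := by
              congr 1; ext l; rw [Finset.mul_sum]
          _ = 1 := by simp only [hrow, mul_one]; exact ih i
  -- diagonal entries of powers are positive; reachability gives positive column entries
  have hdiagpow : ∀ m, ∀ i, 0 < (P ^ m) i i := by
    intro m
    induction m with
    | zero => intro i; simp [Matrix.one_apply]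
    | succ m ih =>
        intro i
        rw [pow_succ', Matrix.mul_apply]
        refine Finset.sum_pos' (fun l _ => mul_nonneg (hnonneg i l) (hp0 m l i)) ?_
        exact ⟨i, Finset.mem_univ i, mul_pos (hdiag i) (ih i)⟩
  have hreach : ∀ i, ∃ k, ∀ m, k ≤ m → 0 < (P ^ m) i r := by
    intro i
    induction hr i with
    | refl => exact ⟨0, fun m _ => hdiagpow m r⟩
    | @tail b c _ hbc ih =>
        obtain ⟨k, hk⟩ := ih
        refine ⟨k + 1, fun m hm => ?_⟩
        obtain ⟨m', rfl⟩ : ∃ m', m = m' + 1 := ⟨m - 1, by omega⟩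
        rw [pow_succ', Matrix.mul_apply]
        refine Finset.sum_pos' (fun l _ => mul_nonneg (hnonneg c l) (hp0 m' l r)) ?_
        exact ⟨b, Finset.mem_univ b, mul_pos hbc.2 (hk m' (by omega))⟩
  choose kf hkf using hreach
  set K : ℕ := (Finset.univ.sup kf) + 1 with hK
  have hK0 : 0 < K := Nat.succ_pos _
  have hKpos : ∀ i, 0 < (P ^ K) i r := fun i =>
    hkf i K (Nat.le_succ_of_le (Finset.le_sup (Finset.mem_univ i)))
  set δ : ℝ := Finset.univ.inf' Finset.univ_nonempty (fun i => (P ^ K) i r) with hδdef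
  have hδpos : 0 < δ := by
    rw [hδdef, Finset.lt_inf'_iff]
    exact fun i _ => hKpos i
  have hδle : ∀ i, δ ≤ (P ^ K) i r := fun i =>
    Finset.inf'_le _ (Finset.mem_univ i)
  have hδ1 : δ ≤ 1 := by
    refine le_trans (hδle r) ?_
    calc (P ^ K) r r ≤ ∑ j, (P ^ K) r j :=
          Finset.single_le_sum (fun j _ => hp0 K r j) (Finset.mem_univ r)
      _ = 1 := hp1 K r
  -- for each x, all entries of P^k x converge to a common limit
  have hconv : ∀ x : Fin n → ℝ, ∃ c : ℝ,
      ∀ i, Tendsto (fun k => ((P ^ k) *ᵥ x) i) atTop (nhds c) := by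
    intro x
    set lo : ℕ → ℝ := fun k => Finset.univ.inf' Finset.univ_nonempty
      (fun i => ((P ^ k) *ᵥ x) i) with hlo
    set hi : ℕ → ℝ := fun k => Finset.univ.sup' Finset.univ_nonempty
      (fun i => ((P ^ k) *ᵥ x) i) with hhi
    have hlole : ∀ k i, lo k ≤ ((P ^ k) *ᵥ x) i := fun k i =>
      Finset.inf'_le _ (Finset.mem_univ i)
    have hlehi : ∀ k i, ((P ^ k) *ᵥ x) i ≤ hi k := fun k i =>
      Finset.le_sup' _ (Finset.mem_univ i)
    have hstep : ∀ k, (P ^ (k+1)) *ᵥ x = P *ᵥ ((P ^ k) *ᵥ x) := by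
      intro k; rw [Matrix.mulVec_mulVec, ← pow_succ']
    have hlomono : Monotone lo := by
      apply monotone_nat_of_le_succ
      intro k
      apply Finset.le_inf'
      intro i _
      rw [hstep k]
      exact le_mv P hnonneg hrow _ (lo k) (hlole k) i
    have hhianti : Antitone hi := by
      apply antitone_nat_of_succ_le
      intro k
      apply Finset.sup'_le
      intro i _
      rw [hstep k]
      exact mv_le P hnonneg hrow _ (hi k) (hlehi k) i
    have hlohi : ∀ k, lo k ≤ hi k := fun k => le_trans (hlole k r) (hlehi k r)
    -- geometric contraction along multiples of K
    have hKstep : ∀ t, (P ^ (K * (t+1))) *ᵥ x = (P ^ K) *ᵥ ((P ^ (K * t)) *ᵥ x) := by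
      intro t
      rw [Matrix.mulVec_mulVec, ← pow_add, show K + K * t = K * (t+1) by ring]
    have hcontr : ∀ t, hi (K * (t+1)) - lo (K * (t+1)) ≤ (1 - δ) * (hi (K * t) - lo (K * t)) := by
      intro t
      set z := (P ^ (K * t)) *ᵥ x with hz
      have hup : hi (K * (t+1)) ≤ δ * z r + (1 - δ) * hi (K * t) := by
        apply Finset.sup'_le
        intro i _
        rw [hKstep t]
        exact mv_upper (P ^ K) (hp0 K) (hp1 K) r δ hδle z (hi (K * t)) (hlehi (K * t)) i
      have hdn : δ * z r + (1 - δ) * lo (K * t) ≤ lo (K * (t+1)) := by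
        apply Finset.le_inf'
        intro i _
        rw [hKstep t]
        exact mv_lower (P ^ K) (hp0 K) (hp1 K) r δ hδle z (lo (K * t)) (hlole (K * t)) i
      linarith
    have hgeo : ∀ t, hi (K * t) - lo (K * t) ≤ (1 - δ)^t * (hi 0 - lo 0) := by
      intro t
      induction t with
      | zero => simp
      | succ t ih =>
          calc hi (K * (t+1)) - lo (K * (t+1)) ≤ (1 - δ) * (hi (K * t) - lo (K * t)) := hcontr t
            _ ≤ (1 - δ) * ((1 - δ)^t * (hi 0 - lo 0)) :=
                mul_le_mul_of_nonneg_left ih (by linarith)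
            _ = (1 - δ)^(t+1) * (hi 0 - lo 0) := by ring
    have hsanti : Antitone (fun k => hi k - lo k) := fun a b hab =>
      sub_le_sub (hhianti hab) (hlomono hab)
    have hsbound : ∀ k, hi k - lo k ≤ (1 - δ)^(k / K) * (hi 0 - lo 0) := by
      intro k
      have h1 : K * (k / K) ≤ k := Nat.mul_div_le k K
      exact le_trans (hsanti h1) (hgeo (k / K))
    have hdivtop : Tendsto (fun k : ℕ => k / K) atTop atTop := by
      apply tendsto_atTop_atTop.2
      intro b
      exact ⟨K * b, fun a ha => (Nat.le_div_iff_mul_le hK0).2 (by rwa [Nat.mul_comm] at ha)⟩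
    have hpow0 : Tendsto (fun k : ℕ => (1 - δ)^(k / K) * (hi 0 - lo 0)) atTop (nhds 0) := by
      have h1 : Tendsto (fun t : ℕ => (1 - δ)^t) atTop (nhds 0) :=
        tendsto_pow_atTop_nhds_zero_of_lt_one (by linarith) (by linarith)
      have h2 := (h1.comp hdivtop).mul_const (hi 0 - lo 0)
      simpa using h2
    have hspread0 : Tendsto (fun k => hi k - lo k) atTop (nhds 0) :=
      squeeze_zero (fun k => by linarith [hlohi k]) hsbound hpow0
    have hbdd : BddAbove (Set.range lo) := by
      refine ⟨hi 0, ?_⟩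
      rintro _ ⟨k, rfl⟩
      exact le_trans (hlohi k) (hhianti (Nat.zero_le k))
    have hloL : Tendsto lo atTop (nhds (⨆ k, lo k)) :=
      tendsto_atTop_ciSup hlomono hbdd
    set L := ⨆ k, lo k with hL
    have hhiL : Tendsto hi atTop (nhds L) := by
      have := hloL.add hspread0
      simp only [add_zero] at this
      convert this using 2 with k
      ring
    exact ⟨L, fun i => tendsto_of_tendsto_of_tendsto_of_le_of_le hloL hhiL
      (fun k => hlole k i) (fun k => hlehi k i)⟩
  choose L hL using hconv
  set y : Fin n → ℝ := fun j => L (Pi.single j 1) with hy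
  have hentry : ∀ (k : ℕ) (i j : Fin n), ((P ^ k) *ᵥ Pi.single j 1) i = (P ^ k) i j := by
    intro k i j
    simp [Matrix.mulVec_single]
  have hyconv : ∀ i j, Tendsto (fun k => (P ^ k) i j) atTop (nhds (y j)) := by
    intro i j
    have := hL (Pi.single j 1) i
    simpa only [hentry] using this
  have hLlin : ∀ x : Fin n → ℝ, L x = ∑ j, y j * x j := by
    intro x
    have h1 : Tendsto (fun k => ((P ^ k) *ᵥ x) r) atTop (nhds (L x)) := hL x r
    have h2 : Tendsto (fun k => ((P ^ k) *ᵥ x) r) atTop (nhds (∑ j, y j * x j)) := by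
      have : ∀ k, ((P ^ k) *ᵥ x) r = ∑ j, (P ^ k) r j * x j := fun k => mv_apply _ _ _
      simp only [this]
      exact tendsto_finset_sum _ fun j _ => (hyconv r j).mul_const (x j)
    exact tendsto_nhds_unique h1 h2
  have hynn : ∀ j, 0 ≤ y j := by
    intro j
    refine ge_of_tendsto' (hL (Pi.single j 1) r) fun k => ?_
    rw [hentry]
    exact hp0 k r j
  have hysum : ∑ j, y j = 1 := by
    have hone : L (fun _ => 1) = 1 := by
      refine tendsto_nhds_unique (hL (fun _ => 1) r) ?_
      have : ∀ k, ((P ^ k) *ᵥ fun _ => 1) r = 1 := by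
        intro k
        rw [mv_apply]
        simpa using hp1 k r
      simp only [this]
      exact tendsto_const_nhds
    have := hLlin (fun _ => 1)
    rw [hone] at this
    simpa using this.symm
  refine ⟨y, hynn, hysum, ?_, ?_⟩
  · refine tendsto_pi_nhds.2 ?_
    intro i
    rw [tendsto_pi_nhds]
    intro j
    simpa using hyconv i j
  · intro x₀
    rw [tendsto_pi_nhds]
    intro i
    have := hL x₀ i
    rw [hLlin x₀] at this
    convert this using 2
    rfl
end

section
/- Let {P_k}_{k≥0} ⊂ ℝ^{n×n} be a sequence of row-stochastic matrices and suppose there exist η > 0 and an integer B ≥ 0 such that: (i) every diagonal entry of every P_k is at least η; (ii) every nonzero entry of every P_k is at least η; and (iii) for every k, the directed graph with an edge from j to i (i ≠ j) whenever (P_m)_{ij} > 0 for some m ∈ {k, k+1, …, k+B} has a directed spanning tree. Then the left products Φ_k = P_k P_{k-1} ⋯ P_1 P_0 converge, as k → ∞, to a rank-one row-stochastic matrix 1·yᵀ for some entrywise nonnegative y ∈ ℝ^n with yᵀ1 = 1; in particular, for every x₀ the iterates x(k+1) = P_k x(k) reach consensus. -/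
open Matrix Finset Filter

/-- The left product `Φ_k = P_k · P_{k-1} ⋯ P_1 · P_0`. -/
def leftProd {n : ℕ} (P : ℕ → Matrix (Fin n) (Fin n) ℝ) :
    ℕ → Matrix (Fin n) (Fin n) ℝ
  | 0 => P 0
  | (k + 1) => P (k + 1) * leftProd P k

set_option linter.unusedSectionVars false
set_option linter.unusedVariables false

namespace ConsensusAux

variable {n : ℕ}

/-- `W P k m = P (k+m-1) * ⋯ * P k`. -/
def W (P : ℕ → Matrix (Fin n) (Fin n) ℝ) (k : ℕ) : ℕ → Matrix (Fin n) (Fin n) ℝ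
  | 0 => 1
  | (m+1) => P (k+m) * W P k m

lemma leftProd_eq (P : ℕ → Matrix (Fin n) (Fin n) ℝ) (k : ℕ) :
    leftProd P k = W P 0 (k+1) := by
  induction k with
  | zero => simp [leftProd, W]
  | succ k ih => rw [leftProd, ih]; simp [W]

lemma W_add (P : ℕ → Matrix (Fin n) (Fin n) ℝ) (k a b : ℕ) :
    W P k (a + b) = W P (k + a) b * W P k a := by
  induction b with
  | zero => simp [W]
  | succ b ih =>
      show W P k ((a+b)+1) = _
      rw [W, ih, W, ← Matrix.mul_assoc]
      ring_nf

variable {P : ℕ → Matrix (Fin n) (Fin n) ℝ}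
  (hnonneg : ∀ k i j, 0 ≤ P k i j) (hrow : ∀ k i, ∑ j, P k i j = 1)
  {η : ℝ} (hη : 0 < η) {B : ℕ}
  (hdiag : ∀ k i, η ≤ P k i i)
  (hentries : ∀ k i j, P k i j ≠ 0 → η ≤ P k i j)

include hnonneg in
lemma W_nonneg (m k : ℕ) (i j : Fin n) : 0 ≤ W P k m i j := by
  induction m generalizing i with
  | zero =>
      simp only [W, Matrix.one_apply]
      split <;> norm_num
  | succ m ih =>
      rw [W, Matrix.mul_apply]
      exact Finset.sum_nonneg fun l _ => mul_nonneg (hnonneg _ _ _) (ih l)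

include hrow in
lemma W_row (m k : ℕ) (i : Fin n) : ∑ j, W P k m i j = 1 := by
  induction m generalizing i with
  | zero => simp [W, Matrix.one_apply]
  | succ m ih =>
      simp only [W, Matrix.mul_apply]
      rw [Finset.sum_comm]
      have : ∀ l, ∑ j, P (k+m) i l * W P k m l j = P (k+m) i l := by
        intro l
        rw [← Finset.mul_sum, ih, mul_one]
      simp only [this]
      exact hrow _ _

include hnonneg hη hdiag in
lemma W_succ_ge (m k : ℕ) (i j : Fin n) : η * W P k m i j ≤ W P k (m+1) i j := by
  rw [W, Matrix.mul_apply]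
  calc η * W P k m i j ≤ P (k+m) i i * W P k m i j :=
        mul_le_mul_of_nonneg_right (hdiag _ _) (W_nonneg hnonneg m k i j)
    _ ≤ ∑ l, P (k+m) i l * W P k m l j :=
        Finset.single_le_sum (f := fun x => P (k+m) i x * W P k m x j)
          (fun l _ => mul_nonneg (hnonneg _ _ _) (W_nonneg hnonneg m k l j)) (mem_univ i)

include hnonneg hη hdiag in
lemma W_le_pos (m k : ℕ) (i j : Fin n) (s : ℕ) (h : 0 < W P k m i j) :
    0 < W P k (m + s) i j := by
  induction s with
  | zero => exact h
  | succ s ih =>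
      have := W_succ_ge hnonneg hη hdiag (m+s) k i j
      have : 0 < η * W P k (m+s) i j := mul_pos hη ih
      calc (0:ℝ) < η * W P k (m+s) i j := this
        _ ≤ W P k (m+s+1) i j := W_succ_ge hnonneg hη hdiag (m+s) k i j

include hnonneg in
lemma W_edge (m k : ℕ) (i l j : Fin n) (hP : 0 < P (k+m) i l) (hW : 0 < W P k m l j) :
    0 < W P k (m+1) i j := by
  rw [W, Matrix.mul_apply]
  calc (0:ℝ) < P (k+m) i l * W P k m l j := mul_pos hP hW
    _ ≤ ∑ x, P (k+m) i x * W P k m x j :=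
        Finset.single_le_sum (f := fun x => P (k+m) i x * W P k m x j)
          (fun x _ => mul_nonneg (hnonneg _ _ _) (W_nonneg hnonneg m k x j)) (mem_univ l)

include hnonneg hη hdiag in
lemma W_diag_pos (m k : ℕ) (i : Fin n) : 0 < W P k m i i := by
  have h0 : 0 < W P k 0 i i := by simp [W, Matrix.one_apply]
  simpa using W_le_pos hnonneg hη hdiag 0 k i i m h0

include hnonneg hη hentries in
lemma W_pos_lb (m k : ℕ) (i j : Fin n) (h : W P k m i j ≠ 0) : η ^ m ≤ W P k m i j := by
  induction m generalizing i with
  | zero =>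
      simp only [W, Matrix.one_apply] at h ⊢
      split
      · norm_num
      · simp_all
  | succ m ih =>
      rw [W, Matrix.mul_apply] at h ⊢
      have hex : ∃ l, P (k+m) i l * W P k m l j ≠ 0 := by
        by_contra hc
        push_neg at hc
        exact h (Finset.sum_eq_zero fun l _ => hc l)
      obtain ⟨l, hl⟩ := hex
      have h1 : P (k+m) i l ≠ 0 := fun h' => hl (by rw [h', zero_mul])
      have h2 : W P k m l j ≠ 0 := fun h' => hl (by rw [h', mul_zero])
      calc η ^ (m+1) = η * η ^ m := by ring
        _ ≤ P (k+m) i l * W P k m l j :=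
            mul_le_mul (hentries _ _ _ h1) (ih l h2) (le_of_lt (pow_pos hη m))
              (le_trans hη.le (hentries _ _ _ h1))
        _ ≤ ∑ x, P (k+m) i x * W P k m x j :=
            Finset.single_le_sum (f := fun x => P (k+m) i x * W P k m x j)
              (fun x _ => mul_nonneg (hnonneg _ _ _) (W_nonneg hnonneg m k x j)) (mem_univ l)



lemma cross {α : Type*} {rel : α → α → Prop} {S : α → Prop} {a b : α}
    (hab : Relation.ReflTransGen rel a b) (ha : S a) :
    ¬ S b → ∃ x y, S x ∧ ¬ S y ∧ rel x y := by
  induction hab with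
  | refl => exact fun hb => absurd ha hb
  | @tail b' c' h e ih =>
      intro hb
      by_cases hx : S b'
      · exact ⟨b', c', hx, hb, e⟩
      · exact ih hx

lemma mulVec_bounds {n : ℕ} (H : (univ : Finset (Fin n)).Nonempty)
    (A : Matrix (Fin n) (Fin n) ℝ) (hA : ∀ i j, 0 ≤ A i j) (hrow : ∀ i, ∑ j, A i j = 1)
    (v : Fin n → ℝ) (i : Fin n) :
    univ.inf' H v ≤ (A *ᵥ v) i ∧ (A *ᵥ v) i ≤ univ.sup' H v := by
  have he : (A *ᵥ v) i = ∑ l, A i l * v l := rfl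
  constructor
  · rw [he]
    calc univ.inf' H v = ∑ l, A i l * univ.inf' H v := by
          rw [← Finset.sum_mul, hrow i, one_mul]
      _ ≤ ∑ l, A i l * v l :=
          Finset.sum_le_sum fun l _ =>
            mul_le_mul_of_nonneg_left (Finset.inf'_le _ (mem_univ l)) (hA i l)
  · rw [he]
    calc ∑ l, A i l * v l ≤ ∑ l, A i l * univ.sup' H v :=
          Finset.sum_le_sum fun l _ =>
            mul_le_mul_of_nonneg_left (Finset.le_sup' _ (mem_univ l)) (hA i l)
      _ = univ.sup' H v := by rw [← Finset.sum_mul, hrow i, one_mul]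

lemma contract {n : ℕ} (H : (univ : Finset (Fin n)).Nonempty)
    (A : Matrix (Fin n) (Fin n) ℝ) (hA : ∀ i j, 0 ≤ A i j) (hrow : ∀ i, ∑ j, A i j = 1)
    {δ : ℝ} (hδ : 0 ≤ δ) (c : Fin n) (hc : ∀ i, δ ≤ A i c) (v : Fin n → ℝ) :
    univ.sup' H (A *ᵥ v) - univ.inf' H (A *ᵥ v)
      ≤ (1 - δ) * (univ.sup' H v - univ.inf' H v) := by
  set M := univ.sup' H v with hM
  set m := univ.inf' H v with hm
  have hvM : ∀ l, v l ≤ M := fun l => Finset.le_sup' _ (mem_univ l)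
  have hmv : ∀ l, m ≤ v l := fun l => Finset.inf'_le _ (mem_univ l)
  have key1 : ∀ i, (A *ᵥ v) i ≤ M - δ * (M - v c) := by
    intro i
    have he : (A *ᵥ v) i = ∑ l, A i l * v l := rfl
    have hsplit : ∑ l, A i l * v l
        = A i c * v c + ∑ l ∈ univ.erase c, A i l * v l :=
      (Finset.add_sum_erase univ (fun l => A i l * v l) (mem_univ c)).symm
    have hb : ∑ l ∈ univ.erase c, A i l * v l ≤ ∑ l ∈ univ.erase c, A i l * M :=
      Finset.sum_le_sum fun l _ => mul_le_mul_of_nonneg_left (hvM l) (hA i l)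
    have hsum : ∑ l ∈ univ.erase c, A i l * M = (1 - A i c) * M := by
      rw [← Finset.sum_mul, Finset.sum_erase_eq_sub (mem_univ c), hrow i]
    have hMc : 0 ≤ M - v c := sub_nonneg.mpr (hvM c)
    have hAc : δ ≤ A i c := hc i
    rw [he, hsplit]
    nlinarith [mul_le_mul_of_nonneg_right hAc hMc]
  have key2 : ∀ i, m + δ * (v c - m) ≤ (A *ᵥ v) i := by
    intro i
    have he : (A *ᵥ v) i = ∑ l, A i l * v l := rfl
    have hsplit : ∑ l, A i l * v l
        = A i c * v c + ∑ l ∈ univ.erase c, A i l * v l :=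
      (Finset.add_sum_erase univ (fun l => A i l * v l) (mem_univ c)).symm
    have hb : ∑ l ∈ univ.erase c, A i l * m ≤ ∑ l ∈ univ.erase c, A i l * v l :=
      Finset.sum_le_sum fun l _ => mul_le_mul_of_nonneg_left (hmv l) (hA i l)
    have hsum : ∑ l ∈ univ.erase c, A i l * m = (1 - A i c) * m := by
      rw [← Finset.sum_mul, Finset.sum_erase_eq_sub (mem_univ c), hrow i]
    have hMc : 0 ≤ v c - m := sub_nonneg.mpr (hmv c)
    have hAc : δ ≤ A i c := hc i
    rw [he, hsplit]
    nlinarith [mul_le_mul_of_nonneg_right hAc hMc]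
  have h1 : univ.sup' H (A *ᵥ v) ≤ M - δ * (M - v c) :=
    Finset.sup'_le _ _ fun i _ => key1 i
  have h2 : m + δ * (v c - m) ≤ univ.inf' H (A *ᵥ v) :=
    Finset.le_inf' _ _ fun i _ => key2 i
  nlinarith


end ConsensusAux

namespace ConsensusAux

variable {n : ℕ} {P : ℕ → Matrix (Fin n) (Fin n) ℝ}
  (hnonneg : ∀ k i j, 0 ≤ P k i j) (hrow : ∀ k i, ∑ j, P k i j = 1)
  {η : ℝ} (hη : 0 < η) {B : ℕ}
  (hdiag : ∀ k i, η ≤ P k i i)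
  (hentries : ∀ k i j, P k i j ≠ 0 → η ≤ P k i j)

include hnonneg hη hdiag in
lemma exists_pos_col
    (htree : ∀ k : ℕ, ∃ r : Fin n, ∀ i : Fin n,
      Relation.ReflTransGen
        (fun x y => x ≠ y ∧ ∃ m : ℕ, k ≤ m ∧ m ≤ k + B ∧ 0 < P m y x) r i)
    (k : ℕ) : ∃ c : Fin n, ∀ i, 0 < W P k (n * n * (B+1)) i c := by
  classical
  choose ρ hρ using fun T : ℕ => htree (k + T * (B+1))
  -- pigeonhole: some root occurs at least n times among the first n*n windows
  obtain ⟨c, -, hc⟩ :=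
    Finset.exists_le_card_fiber_of_mul_le_card_of_maps_to
      (s := Finset.range (n*n)) (t := (univ : Finset (Fin n))) (f := ρ) (n := n)
      (fun a _ => mem_univ _) ⟨ρ 0, mem_univ _⟩
      (by simp)
  -- the growing sets
  set S : ℕ → Finset (Fin n) :=
    fun T => univ.filter fun i => 0 < W P k (T*(B+1)) i c with hS
  have hmemS : ∀ T i, i ∈ S T ↔ 0 < W P k (T*(B+1)) i c := by
    intro T i; simp [hS]
  have hcS : ∀ T, c ∈ S T := fun T =>
    (hmemS T c).mpr (W_diag_pos hnonneg hη hdiag _ k c)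
  have hmono : ∀ T, S T ⊆ S (T+1) := by
    intro T i hi
    rw [hmemS] at hi ⊢
    have : (T+1)*(B+1) = T*(B+1) + (B+1) := by ring
    rw [this]
    exact W_le_pos hnonneg hη hdiag _ k i c _ hi
  have grow : ∀ T, ρ T = c → S T ≠ univ → S T ⊂ S (T+1) := by
    intro T hT hU
    obtain ⟨i0, hi0⟩ : ∃ i, i ∉ S T := by
      by_contra hcon
      push_neg at hcon
      exact hU (Finset.eq_univ_iff_forall.mpr hcon)
    have hreach := hρ T i0
    rw [hT] at hreach
    obtain ⟨x, y, hx, hy, hxy⟩ :=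
      cross (S := fun z => z ∈ S T) hreach (hcS T) hi0
    obtain ⟨-, m, hm1, hm2, hPm⟩ := hxy
    -- y joins S (T+1)
    have hyS : y ∈ S (T+1) := by
      rw [hmemS] at hx ⊢
      set a := T*(B+1) with ha
      have hm : m = k + (a + (m - (k + a))) := by omega
      have h1 : 0 < W P k (a + (m - (k + a))) x c :=
        W_le_pos hnonneg hη hdiag a k x c _ hx
      have h2 : 0 < W P k ((a + (m - (k + a))) + 1) y c := by
        refine W_edge hnonneg _ k y x c ?_ h1
        rw [← hm]; exact hPm
      have h3 : 0 < W P k (((a + (m - (k + a))) + 1) + ((T+1)*(B+1) - ((a + (m - (k + a))) + 1))) y c :=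
        W_le_pos hnonneg hη hdiag _ k y c _ h2
      have hle : ((a + (m - (k + a))) + 1) + ((T+1)*(B+1) - ((a + (m - (k + a))) + 1)) = (T+1)*(B+1) := by
        have : (T+1)*(B+1) = a + B + 1 := by rw [ha]; ring
        omega
      rwa [hle] at h3
    exact ⟨hmono T, fun hsub => hy (hsub hyS)⟩
  -- cardinality induction
  have main : ∀ T, min (((Finset.range T).filter fun t => ρ t = c).card + 1) n ≤ (S T).card := by
    intro T
    induction T with
    | zero =>
        have : 0 < (S 0).card := Finset.card_pos.mpr ⟨c, hcS 0⟩
        simp only [Finset.range_zero, Finset.filter_empty, Finset.card_empty]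
        omega
    | succ T ih =>
        have hcard_le : (S T).card ≤ n := by
          simpa using Finset.card_le_univ (S T)
        have hmono' : (S T).card ≤ (S (T+1)).card := Finset.card_le_card (hmono T)
        rw [Finset.range_add_one, Finset.filter_insert]
        by_cases hT : ρ T = c
        · rw [if_pos hT, Finset.card_insert_of_notMem (by simp)]
          by_cases hU : S T = univ
          · have : (S T).card = n := by rw [hU]; simp
            omega
          · have hlt : (S T).card < (S (T+1)).card :=
              Finset.card_lt_card (grow T hT hU)
            have hne : (S T).card < n := by
              rcases lt_or_eq_of_le hcard_le with h | h
              · exact h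
              · exact absurd (Finset.eq_univ_of_card _ (by simpa using h)) hU
            omega
        · rw [if_neg hT]
          omega
  have hfinal := main (n*n)
  have hn : 0 < n := c.pos
  have hScard : n ≤ (S (n*n)).card := by
    have := hc
    omega
  have hcle : (S (n*n)).card ≤ n := by simpa using Finset.card_le_univ (S (n*n))
  have hSuniv : S (n*n) = univ :=
    Finset.eq_univ_of_card _ (by rw [Fintype.card_fin]; omega)
  refine ⟨c, fun i => ?_⟩
  have : i ∈ S (n*n) := hSuniv ▸ mem_univ i
  rwa [hmemS] at this

end ConsensusAux



open ConsensusAux in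
/-- Consensus for left products of row-stochastic matrices: if all diagonal entries and
all nonzero entries of every `P_k` are bounded below by some `η > 0`, and for every `k`
the union directed graph over the window `{k, …, k+B}` (edge from `j` to `i`, `i ≠ j`,
whenever `(P_m)_{ij} > 0` for some `m` in the window) has a directed spanning tree, then
the left products `Φ_k = P_k ⋯ P_0` converge to a rank-one row-stochastic matrix `1·yᵀ`;
in particular the iterates `x(k+1) = P_k x(k)` reach consensus for every `x₀`. -/
theorem left_products_of_stochastic_matrices_consensus
    {n : ℕ} (P : ℕ → Matrix (Fin n) (Fin n) ℝ)
    (hnonneg : ∀ k i j, 0 ≤ P k i j) (hrow : ∀ k i, ∑ j, P k i j = 1)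
    (η : ℝ) (hη : 0 < η) (B : ℕ)
    (hdiag : ∀ k i, η ≤ P k i i)
    (hentries : ∀ k i j, P k i j ≠ 0 → η ≤ P k i j)
    (htree : ∀ k : ℕ, ∃ r : Fin n, ∀ i : Fin n,
      Relation.ReflTransGen
        (fun x y => x ≠ y ∧ ∃ m : ℕ, k ≤ m ∧ m ≤ k + B ∧ 0 < P m y x) r i) :
    ∃ y : Fin n → ℝ, (∀ i, 0 ≤ y i) ∧ (∑ i, y i) = 1 ∧
      Tendsto (fun k : ℕ => leftProd P k) atTop (nhds (Matrix.of fun _ j => y j)) ∧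
      ∀ x₀ : Fin n → ℝ, ∀ i j : Fin n,
        Tendsto (fun k : ℕ => (leftProd P k *ᵥ x₀) i - (leftProd P k *ᵥ x₀) j)
          atTop (nhds 0) := by

  classical
  obtain ⟨r0, -⟩ := htree 0
  have hn : 0 < n := r0.pos
  have H : (univ : Finset (Fin n)).Nonempty := ⟨r0, mem_univ r0⟩
  have hη1 : η ≤ 1 := by
    calc η ≤ P 0 r0 r0 := hdiag 0 r0
      _ ≤ ∑ j, P 0 r0 j :=
        Finset.single_le_sum (fun j _ => hnonneg 0 r0 j) (mem_univ r0)
      _ = 1 := hrow 0 r0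
  set L : ℕ := n * n * (B+1) with hL
  have hLpos : 0 < L := by positivity
  set δ : ℝ := η ^ L with hδ
  have hδ0 : 0 < δ := pow_pos hη L
  have hδ1 : δ ≤ 1 := pow_le_one₀ hη.le hη1
  have hcol : ∀ m : ℕ, ∃ c, ∀ i, δ ≤ W P m L i c := by
    intro m
    obtain ⟨c, hcpos⟩ := exists_pos_col hnonneg hη hdiag htree m
    exact ⟨c, fun i => W_pos_lb hnonneg hη hentries L m i c (ne_of_gt (hcpos i))⟩
  -- convergence of W P 0 m *ᵥ u for every u
  have key : ∀ u : Fin n → ℝ, ∃ ℓ : ℝ,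
      ∀ i, Tendsto (fun m => (W P 0 m *ᵥ u) i) atTop (nhds ℓ) := by
    intro u
    set v : ℕ → Fin n → ℝ := fun m => W P 0 m *ᵥ u with hv
    set Mx : ℕ → ℝ := fun m => univ.sup' H (v m) with hMx
    set mn : ℕ → ℝ := fun m => univ.inf' H (v m) with hmn
    have hvstep : ∀ m s, v (m + s) = W P m s *ᵥ v m := by
      intro m s
      rw [hv]
      show W P 0 (m + s) *ᵥ u = _
      rw [W_add P 0 m s, zero_add, mulVec_mulVec]
    have hb : ∀ m s i, mn m ≤ v (m+s) i ∧ v (m+s) i ≤ Mx m := by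
      intro m s i
      rw [hvstep m s]
      exact mulVec_bounds H (W P m s) (fun a b => W_nonneg hnonneg s m a b)
        (fun a => W_row hrow s m a) (v m) i
    have hMxa : ∀ m s, Mx (m+s) ≤ Mx m := fun m s =>
      Finset.sup'_le _ _ fun i _ => (hb m s i).2
    have hmna : ∀ m s, mn m ≤ mn (m+s) := fun m s =>
      Finset.le_inf' _ _ fun i _ => (hb m s i).1
    have hosc : ∀ m, Mx (m+L) - mn (m+L) ≤ (1-δ) * (Mx m - mn m) := by
      intro m
      obtain ⟨c, hc⟩ := hcol m
      have : v (m + L) = W P m L *ᵥ v m := hvstep m L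
      rw [hMx, hmn]
      simp only [this]
      exact contract H (W P m L) (fun a b => W_nonneg hnonneg L m a b)
        (fun a => W_row hrow L m a) hδ0.le c hc (v m)
    have hosc0 : ∀ m, 0 ≤ Mx m - mn m := by
      intro m
      have h1 : mn m ≤ v m r0 := Finset.inf'_le _ (mem_univ r0)
      have h2 : v m r0 ≤ Mx m := Finset.le_sup' _ (mem_univ r0)
      linarith
    have hoscmono : ∀ m s, Mx (m+s) - mn (m+s) ≤ Mx m - mn m := by
      intro m s
      have := hMxa m s
      have := hmna m s
      linarith
    have hgeom : ∀ q, Mx (q*L) - mn (q*L) ≤ (1-δ)^q * (Mx 0 - mn 0) := by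
      intro q
      induction q with
      | zero => simp
      | succ q ih =>
          have h1 : (q+1)*L = q*L + L := by ring
          rw [h1]
          calc Mx (q*L + L) - mn (q*L + L) ≤ (1-δ) * (Mx (q*L) - mn (q*L)) := hosc (q*L)
            _ ≤ (1-δ) * ((1-δ)^q * (Mx 0 - mn 0)) :=
                mul_le_mul_of_nonneg_left ih (by linarith)
            _ = (1-δ)^(q+1) * (Mx 0 - mn 0) := by ring
    have hosc_tendsto : Tendsto (fun m => Mx m - mn m) atTop (nhds 0) := by
      apply squeeze_zero hosc0 (g := fun m => (1-δ)^(m / L) * (Mx 0 - mn 0))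
      · intro m
        calc Mx m - mn m ≤ Mx (m / L * L) - mn (m / L * L) := by
              have h1 : m / L * L + (m - m / L * L) = m := by
                have := Nat.div_mul_le_self m L
                omega
              conv_lhs => rw [← h1]
              exact hoscmono _ _
          _ ≤ (1-δ)^(m / L) * (Mx 0 - mn 0) := hgeom (m / L)
      · have h1 : Tendsto (fun q : ℕ => (1-δ)^q) atTop (nhds 0) :=
          tendsto_pow_atTop_nhds_zero_of_lt_one (by linarith) (by linarith)
        have h2 : Tendsto (fun m : ℕ => m / L) atTop atTop := by
          apply tendsto_atTop_atTop.mpr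
          intro b
          exact ⟨b * L, fun m hm => (Nat.le_div_iff_mul_le hLpos).mpr hm⟩
        simpa using (h1.comp h2).mul_const (Mx 0 - mn 0)
    have hmn_mono : Monotone mn := monotone_nat_of_le_succ fun m => hmna m 1
    have hmn_bdd : BddAbove (Set.range mn) := by
      refine ⟨Mx 0, ?_⟩
      rintro x ⟨m, rfl⟩
      have h1 : mn m ≤ Mx m := by have := hosc0 m; linarith
      have h2 : Mx m ≤ Mx 0 := by simpa using hMxa 0 m
      linarith
    have hml : Tendsto mn atTop (nhds (⨆ m, mn m)) :=
      tendsto_atTop_ciSup hmn_mono hmn_bdd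
    have hMl : Tendsto Mx atTop (nhds (⨆ m, mn m)) := by
      have : Mx = fun m => (Mx m - mn m) + mn m := by funext m; ring
      rw [this]
      simpa using hosc_tendsto.add hml
    refine ⟨⨆ m, mn m, fun i => ?_⟩
    refine tendsto_of_tendsto_of_tendsto_of_le_of_le hml hMl ?_ ?_
    · intro m; exact Finset.inf'_le _ (mem_univ i)
    · intro m; exact Finset.le_sup' _ (mem_univ i)
  have key' : ∀ j : Fin n, ∃ ℓ : ℝ,
      ∀ i, Tendsto (fun m => W P 0 m i j) atTop (nhds ℓ) := by
    intro j
    obtain ⟨ℓ, hℓ⟩ := key (Pi.single j 1)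
    refine ⟨ℓ, fun i => ?_⟩
    have := hℓ i
    simpa [Matrix.mulVec_single] using this
  choose y hy using key'
  have hynn : ∀ j, 0 ≤ y j := fun j =>
    ge_of_tendsto' (hy j r0) (fun m => W_nonneg hnonneg m 0 r0 j)
  have hysum : ∑ j, y j = 1 := by
    have h1 : Tendsto (fun m => ∑ j, W P 0 m r0 j) atTop (nhds (∑ j, y j)) :=
      tendsto_finset_sum _ fun j _ => hy j r0
    have h2 : (fun m => ∑ j, W P 0 m r0 j) = fun _ => (1:ℝ) := by
      funext m; exact W_row hrow m 0 r0
    rw [h2] at h1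
    exact tendsto_nhds_unique h1 tendsto_const_nhds
  refine ⟨y, hynn, hysum, ?_, ?_⟩
  · have hW : Tendsto (fun m => W P 0 m) atTop
        (nhds (Matrix.of fun _ j => y j)) := by
      refine tendsto_pi_nhds.mpr ?_
      intro i
      rw [tendsto_pi_nhds]
      intro j
      simpa using hy j i
    have : (fun k : ℕ => leftProd P k) = fun k => W P 0 (k+1) := by
      funext k; exact leftProd_eq P k
    rw [this]
    exact hW.comp (tendsto_add_atTop_nat 1)
  · intro x₀ i j
    have hval : ∀ a : Fin n, Tendsto (fun k : ℕ => (leftProd P k *ᵥ x₀) a)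
        atTop (nhds (∑ l, y l * x₀ l)) := by
      intro a
      have heq : (fun k : ℕ => (leftProd P k *ᵥ x₀) a)
          = fun k => ∑ l, W P 0 (k+1) a l * x₀ l := by
        funext k
        rw [leftProd_eq P k]
        rfl
      rw [heq]
      apply tendsto_finset_sum
      intro l _
      exact (((hy l a).comp (tendsto_add_atTop_nat 1)).mul_const (x₀ l))
    simpa using (hval i).sub (hval j)
end

section
/- Let {A_1, …, A_m} be a finite set of row-stochastic n×n matrices such that every finite product A_{i_k} A_{i_{k-1}} ⋯ A_{i_1} (each i_j ∈ {1,…,m}) is SIA. Then for every ε > 0 there exists an integer N such that every product of length k ≥ N of matrices from the set is within ε, entrywise, of some rank-one row-stochastic matrix of the form 1·cᵀ (where c may depend on the product). -/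
open Matrix Finset Filter

/-- A row-stochastic matrix `P` is SIA (stochastic, indecomposable and aperiodic) if
`P^k` converges to a rank-one matrix `1·yᵀ` for some vector `y`. -/
def IsSIA {n : ℕ} (P : Matrix (Fin n) (Fin n) ℝ) : Prop :=
  ∃ y : Fin n → ℝ,
    Tendsto (fun k : ℕ => P ^ k) atTop (nhds (Matrix.of fun _ j => y j))

namespace Wolfo

variable {n : ℕ}

def Stoch (P : Matrix (Fin n) (Fin n) ℝ) : Prop :=
  (∀ i j, 0 ≤ P i j) ∧ ∀ i, ∑ j, P i j = 1

lemma stoch_one : Stoch (1 : Matrix (Fin n) (Fin n) ℝ) := by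
  constructor
  · intro i j
    by_cases h : i = j <;> simp [Matrix.one_apply, h]
  · intro i
    simp [Matrix.one_apply]

lemma stoch_mul {P Q : Matrix (Fin n) (Fin n) ℝ} (hP : Stoch P) (hQ : Stoch Q) :
    Stoch (P * Q) := by
  constructor
  · intro i j
    rw [Matrix.mul_apply]
    exact Finset.sum_nonneg fun k _ => mul_nonneg (hP.1 i k) (hQ.1 k j)
  · intro i
    simp only [Matrix.mul_apply]
    rw [Finset.sum_comm]
    calc ∑ k, ∑ j, P i k * Q k j = ∑ k, P i k * ∑ j, Q k j := by
          simp [Finset.mul_sum]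
      _ = 1 := by simp [hQ.2, hP.2 i]

lemma stoch_prod (hn : 0 < n) {m : ℕ} (A : Fin m → Matrix (Fin n) (Fin n) ℝ)
    (hst : ∀ l, Stoch (A l)) : ∀ w : List (Fin m), Stoch ((w.map A).prod) := by
  intro w
  induction w with
  | nil => simpa using stoch_one
  | cons a t ih => simpa using stoch_mul (hst a) ih

lemma stoch_pow (hn : 0 < n) {P : Matrix (Fin n) (Fin n) ℝ} (hP : Stoch P) (k : ℕ) :
    Stoch (P ^ k) := by
  induction k with
  | zero => simpa using stoch_one
  | succ k ih => rw [pow_succ]; exact stoch_mul ih hP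

lemma entry_le_one {P : Matrix (Fin n) (Fin n) ℝ} (hP : Stoch P) (i j : Fin n) :
    P i j ≤ 1 := by
  calc P i j ≤ ∑ k, P i k :=
        Finset.single_le_sum (fun k _ => hP.1 i k) (Finset.mem_univ j)
    _ = 1 := hP.2 i

def Scr (P : Matrix (Fin n) (Fin n) ℝ) : Prop :=
  ∀ i i' : Fin n, ∃ j, 0 < P i j ∧ 0 < P i' j

lemma mul_pos_iff {P Q : Matrix (Fin n) (Fin n) ℝ} (hP : ∀ i j, 0 ≤ P i j)
    (hQ : ∀ i j, 0 ≤ Q i j) (i j : Fin n) :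
    0 < (P * Q) i j ↔ ∃ k, 0 < P i k ∧ 0 < Q k j := by
  rw [Matrix.mul_apply]
  constructor
  · intro h
    by_contra hno
    push_neg at hno
    have hz : ∀ k ∈ Finset.univ, P i k * Q k j = 0 := by
      intro k _
      rcases lt_or_eq_of_le (hP i k) with hk | hk
      · have := hno k hk
        have : Q k j = 0 := le_antisymm this (hQ k j)
        simp [this]
      · simp [← hk]
    rw [Finset.sum_eq_zero hz] at h
    exact lt_irrefl 0 h
  · rintro ⟨k, hk1, hk2⟩
    have h1 : 0 < P i k * Q k j := mul_pos hk1 hk2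
    have h2 : P i k * Q k j ≤ ∑ k, P i k * Q k j :=
      Finset.single_le_sum (fun l _ => mul_nonneg (hP i l) (hQ l j)) (Finset.mem_univ k)
    linarith

lemma row_pos {P : Matrix (Fin n) (Fin n) ℝ} (hP : Stoch P) (i : Fin n) :
    ∃ k, 0 < P i k := by
  by_contra h
  push_neg at h
  have : ∑ k, P i k ≤ 0 := Finset.sum_nonpos fun k _ => h k
  rw [hP.2 i] at this
  linarith

lemma scr_mul_left {P Q : Matrix (Fin n) (Fin n) ℝ} (hP : Stoch P)
    (hQnn : ∀ i j, 0 ≤ Q i j) (hQ : Scr Q) : Scr (P * Q) := by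
  intro i i'
  obtain ⟨k, hk⟩ := row_pos hP i
  obtain ⟨k', hk'⟩ := row_pos hP i'
  obtain ⟨j, hj1, hj2⟩ := hQ k k'
  exact ⟨j, (mul_pos_iff hP.1 hQnn i j).2 ⟨k, hk, hj1⟩,
    (mul_pos_iff hP.1 hQnn i' j).2 ⟨k', hk', hj2⟩⟩

lemma scr_mul_right {P Q : Matrix (Fin n) (Fin n) ℝ} (hPnn : ∀ i j, 0 ≤ P i j)
    (hP : Scr P) (hQ : Stoch Q) : Scr (P * Q) := by
  intro i i'
  obtain ⟨k, hk1, hk2⟩ := hP i i'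
  obtain ⟨j, hj⟩ := row_pos hQ k
  exact ⟨j, (mul_pos_iff hPnn hQ.1 i j).2 ⟨k, hk1, hj⟩,
    (mul_pos_iff hPnn hQ.1 i' j).2 ⟨k, hk2, hj⟩⟩

noncomputable def supp (P : Matrix (Fin n) (Fin n) ℝ) : Fin n → Fin n → Bool :=
  fun i j => decide (0 < P i j)

lemma supp_pos_iff {P Q : Matrix (Fin n) (Fin n) ℝ} (h : supp P = supp Q)
    (i j : Fin n) : 0 < P i j ↔ 0 < Q i j := by
  have := congrFun (congrFun h i) j
  simpa [supp] using this

lemma scr_of_supp_eq {P Q : Matrix (Fin n) (Fin n) ℝ} (h : supp P = supp Q)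
    (hP : Scr P) : Scr Q := by
  intro i i'
  obtain ⟨j, h1, h2⟩ := hP i i'
  exact ⟨j, (supp_pos_iff h i j).1 h1, (supp_pos_iff h i' j).1 h2⟩

lemma supp_mul_congr {P P' Q : Matrix (Fin n) (Fin n) ℝ}
    (hP : ∀ i j, 0 ≤ P i j) (hP' : ∀ i j, 0 ≤ P' i j) (hQ : ∀ i j, 0 ≤ Q i j)
    (h : supp P = supp P') : supp (P * Q) = supp (P' * Q) := by
  funext i j
  simp only [supp, decide_eq_decide]
  rw [mul_pos_iff hP hQ, mul_pos_iff hP' hQ]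
  constructor <;> rintro ⟨k, h1, h2⟩
  · exact ⟨k, (supp_pos_iff h i k).1 h1, h2⟩
  · exact ⟨k, (supp_pos_iff h i k).2 h1, h2⟩


lemma sia_scr (hn : 0 < n) {P : Matrix (Fin n) (Fin n) ℝ} (hP : Stoch P)
    (h : IsSIA P) : ∃ k, Scr (P ^ k) := by
  obtain ⟨y, hy⟩ := h
  have hent : ∀ i j : Fin n, Tendsto (fun k : ℕ => (P ^ k) i j) atTop (nhds (y j)) := by
    intro i j
    have hc : Continuous fun M : Matrix (Fin n) (Fin n) ℝ => M i j :=
      (continuous_apply j).comp (continuous_apply i)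
    have := (hc.tendsto _).comp hy
    exact this
  set i0 : Fin n := ⟨0, hn⟩
  have hsum : Tendsto (fun k : ℕ => ∑ j, (P ^ k) i0 j) atTop (nhds (∑ j, y j)) :=
    tendsto_finset_sum _ fun j _ => hent i0 j
  have hsum1 : Tendsto (fun k : ℕ => ∑ j, (P ^ k) i0 j) atTop (nhds 1) := by
    have : (fun k : ℕ => ∑ j, (P ^ k) i0 j) = fun _ => (1 : ℝ) := by
      funext k; exact (stoch_pow hn hP k).2 i0
    rw [this]; exact tendsto_const_nhds
  have hysum : ∑ j, y j = 1 := tendsto_nhds_unique hsum hsum1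
  have hjpos : ∃ j, 0 < y j := by
    by_contra hno
    push_neg at hno
    have : ∑ j, y j ≤ 0 := Finset.sum_nonpos fun j _ => hno j
    rw [hysum] at this; linarith
  obtain ⟨j, hj⟩ := hjpos
  have hev : ∀ᶠ k in atTop, ∀ i : Fin n, 0 < (P ^ k) i j := by
    have : ∀ᶠ k in atTop, ∀ i ∈ (Finset.univ : Finset (Fin n)), 0 < (P ^ k) i j := by
      rw [Filter.eventually_all_finset]
      intro i _
      exact (hent i j).eventually (eventually_gt_nhds hj)
    filter_upwards [this] with k hk i using hk i (Finset.mem_univ i)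
  obtain ⟨k, hk⟩ := hev.exists
  exact ⟨k, fun i i' => ⟨j, hk i, hk i'⟩⟩


lemma prefix_split {m : ℕ} (A : Fin m → Matrix (Fin n) (Fin n) ℝ)
    (w : List (Fin m)) (l : ℕ) :
    ((w.map A).prod) = (((w.take l).map A).prod) * (((w.drop l).map A).prod) := by
  conv_lhs => rw [← List.take_append_drop l w]
  rw [List.map_append, List.prod_append]

lemma scr_of_long (hn : 0 < n) {m : ℕ} (A : Fin m → Matrix (Fin n) (Fin n) ℝ)
    (hst : ∀ l, Stoch (A l))
    (hSIA : ∀ w : List (Fin m), w ≠ [] → IsSIA ((w.map A).prod)) :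
    ∀ w : List (Fin m), Fintype.card (Fin n → Fin n → Bool) ≤ w.length →
      Scr ((w.map A).prod) := by
  intro w hw
  by_contra hns
  -- all prefixes are non-scrambling
  have hpref : ∀ l : ℕ, ¬ Scr (((w.take l).map A).prod) := by
    intro l hscr
    apply hns
    rw [prefix_split A w l]
    exact scr_mul_right (stoch_prod hn A hst _).1 hscr (stoch_prod hn A hst _)
  set K := Fintype.card (Fin n → Fin n → Bool) with hK
  -- pigeonhole on supports of prefix products
  obtain ⟨a, b, hab, hfeq⟩ :=
    Fintype.exists_ne_map_eq_of_card_lt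
      (fun l : Fin (K + 1) => supp (((w.take (l : ℕ)).map A).prod))
      (by simp [hK])
  -- wlog a < b
  have main : ∀ a b : Fin (K + 1), (a : ℕ) < (b : ℕ) →
      supp (((w.take (a : ℕ)).map A).prod) = supp (((w.take (b : ℕ)).map A).prod) →
      False := by
    intro a b hlt heq
    set u : List (Fin m) := w.take (a : ℕ) with hu
    set v : List (Fin m) := (w.take (b : ℕ)).drop (a : ℕ) with hv
    have huv : w.take (b : ℕ) = u ++ v := by
      conv_lhs => rw [← List.take_append_drop (a : ℕ) (w.take (b : ℕ))]
      rw [hu, hv, List.take_take, min_eq_left hlt.le]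
    have hvne : v ≠ [] := by
      have hblen : (b : ℕ) ≤ w.length := le_trans (Nat.lt_succ_iff.mp b.isLt) hw
      have : v.length = (b : ℕ) - (a : ℕ) := by
        rw [hv, List.length_drop, List.length_take, min_eq_left hblen]
      intro hnil
      rw [hnil] at this
      simp at this
      omega
    set P : Matrix (Fin n) (Fin n) ℝ := ((u.map A).prod) with hP
    set Q : Matrix (Fin n) (Fin n) ℝ := ((v.map A).prod) with hQ
    have hPs : Stoch P := stoch_prod hn A hst u
    have hQs : Stoch Q := stoch_prod hn A hst v
    have hPQ : supp (P * Q) = supp P := by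
      rw [hP, hQ, ← List.prod_append, ← List.map_append, ← huv]
      exact heq.symm
    have key : ∀ k : ℕ, supp (P * Q ^ k) = supp P := by
      intro k
      induction k with
      | zero => simp
      | succ k ih =>
        have : P * Q ^ (k + 1) = (P * Q ^ k) * Q := by
          rw [pow_succ, ← mul_assoc]
        rw [this]
        calc supp ((P * Q ^ k) * Q) = supp (P * Q) :=
              supp_mul_congr (stoch_mul hPs (stoch_pow hn hQs k)).1 hPs.1 hQs.1 ih
          _ = supp P := hPQ
    obtain ⟨k, hk⟩ := sia_scr hn hQs (hSIA v hvne)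
    have : Scr (P * Q ^ k) := scr_mul_left hPs (stoch_pow hn hQs k).1 hk
    exact hpref (a : ℕ) (scr_of_supp_eq (key k) this)
  rcases (show a ≠ b from hab).lt_or_gt with h | h
  · exact main a b (by exact_mod_cast h) hfeq
  · exact main b a (by exact_mod_cast h) hfeq.symm

lemma contraction {P Q : Matrix (Fin n) (Fin n) ℝ} (hn : 0 < n)
    (hP : Stoch P) (hQnn : ∀ i j, 0 ≤ Q i j) {a D : ℝ} (hD : 0 ≤ D)
    (ha : ∀ i i' : Fin n, a ≤ ∑ k, min (P i k) (P i' k))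
    (hQD : ∀ i i' j : Fin n, Q i j - Q i' j ≤ D)
    (i i' j : Fin n) : (P * Q) i j - (P * Q) i' j ≤ (1 - a) * D := by
  obtain ⟨km, _, hkm⟩ :=
    Finset.exists_min_image (Finset.univ : Finset (Fin n)) (fun k => Q k j)
      ⟨⟨0, hn⟩, Finset.mem_univ _⟩
  set C := Q km j with hC
  have step1 : (P * Q) i j - (P * Q) i' j
      = ∑ k, (P i k - P i' k) * (Q k j - C) := by
    have expand : ∀ k, (P i k - P i' k) * (Q k j - C)
        = P i k * Q k j - P i' k * Q k j - (P i k * C - P i' k * C) := by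
      intro k; ring
    rw [Finset.sum_congr rfl fun k _ => expand k]
    rw [Matrix.mul_apply, Matrix.mul_apply]
    rw [Finset.sum_sub_distrib, Finset.sum_sub_distrib, Finset.sum_sub_distrib,
      ← Finset.sum_mul, ← Finset.sum_mul, hP.2 i, hP.2 i']
    ring
  rw [step1]
  have step2 : ∑ k, (P i k - P i' k) * (Q k j - C)
      ≤ ∑ k, max (P i k - P i' k) 0 * D := by
    apply Finset.sum_le_sum
    intro k _
    have h0 : 0 ≤ Q k j - C := sub_nonneg.2 (hkm k (Finset.mem_univ k))
    have h1 : Q k j - C ≤ D := hQD k km j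
    rcases le_or_gt (P i k - P i' k) 0 with h | h
    · calc (P i k - P i' k) * (Q k j - C) ≤ 0 := mul_nonpos_of_nonpos_of_nonneg h h0
        _ ≤ max (P i k - P i' k) 0 * D := mul_nonneg (le_max_right _ _) hD
    · rw [max_eq_left h.le]
      exact mul_le_mul_of_nonneg_left h1 h.le
  refine le_trans step2 ?_
  rw [← Finset.sum_mul]
  apply mul_le_mul_of_nonneg_right _ hD
  have hid : ∀ k, max (P i k - P i' k) 0 = P i k - min (P i k) (P i' k) := by
    intro k
    rcases le_total (P i k) (P i' k) with h | h
    · rw [min_eq_left h, max_eq_right (by linarith)]; ring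
    · rw [min_eq_right h, max_eq_left (by linarith)]
  rw [Finset.sum_congr rfl fun k _ => hid k, Finset.sum_sub_distrib, hP.2 i]
  linarith [ha i i']

end Wolfo

/-- Wolfowitz's theorem: let `A_1, …, A_m` be row-stochastic `n×n` matrices such that
every finite product `A_{i_k} ⋯ A_{i_1}` is SIA.  Then for every `ε > 0` there is `N`
such that every product of length `≥ N` of matrices from the set is within `ε`,
entrywise, of some rank-one row-stochastic matrix `1·cᵀ` (with `c` depending on the
product). -/
theorem wolfowitz_products_of_SIA_matrices
    {n m : ℕ} (hn : 0 < n) (A : Fin m → Matrix (Fin n) (Fin n) ℝ)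
    (hnonneg : ∀ l i j, 0 ≤ A l i j) (hrow : ∀ l i, ∑ j, A l i j = 1)
    (hSIA : ∀ w : List (Fin m), w ≠ [] → IsSIA ((w.map A).prod)) :
    ∀ ε : ℝ, 0 < ε → ∃ N : ℕ, ∀ w : List (Fin m), N ≤ w.length →
      ∃ c : Fin n → ℝ, (∀ j, 0 ≤ c j) ∧ (∑ j, c j) = 1 ∧
        ∀ i j : Fin n, |(w.map A).prod i j - c j| ≤ ε := by
  intro ε hε
  rcases Nat.eq_zero_or_pos m with hm | hm
  · -- no matrices at all: only the empty word exists, and it has length 0 < 1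
    refine ⟨1, fun w hw => ?_⟩
    exfalso
    cases w with
    | nil => simp at hw
    | cons a t => have := a.isLt; omega
  · have hst : ∀ l, Wolfo.Stoch (A l) := fun l => ⟨hnonneg l, hrow l⟩
    set N0 := Fintype.card (Fin n → Fin n → Bool) with hN0
    have hscr := Wolfo.scr_of_long hn A hst hSIA
    have hnem : Nonempty (Fin m) := ⟨⟨0, hm⟩⟩
    have hnen : Nonempty (Fin n) := ⟨⟨0, hn⟩⟩
    set M : (Fin N0 → Fin m) → Matrix (Fin n) (Fin n) ℝ :=
      fun t => ((List.ofFn t).map A).prod with hM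
    have hMs : ∀ t, Wolfo.Stoch (M t) := fun t => Wolfo.stoch_prod hn A hst _
    have hune : (Finset.univ : Finset ((Fin N0 → Fin m) × Fin n × Fin n)).Nonempty :=
      Finset.univ_nonempty
    set a0 : ℝ := Finset.univ.inf' hune
      (fun x : (Fin N0 → Fin m) × Fin n × Fin n =>
        ∑ j, min (M x.1 x.2.1 j) (M x.1 x.2.2 j)) with ha0
    have hofFn : ∀ l : List (Fin m), l.length = N0 →
        ∃ t : Fin N0 → Fin m, List.ofFn t = l := by
      intro l hl
      refine ⟨fun i => l.get (Fin.cast hl.symm i), ?_⟩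
      apply List.ext_get
      · simp [hl]
      · intro k h1 h2
        simp
    have hover : ∀ l : List (Fin m), l.length = N0 → ∀ i i' : Fin n,
        a0 ≤ ∑ j, min (((l.map A).prod) i j) (((l.map A).prod) i' j) := by
      intro l hl i i'
      obtain ⟨t, ht⟩ := hofFn l hl
      have h := Finset.inf'_le
        (fun x : (Fin N0 → Fin m) × Fin n × Fin n =>
          ∑ j, min (M x.1 x.2.1 j) (M x.1 x.2.2 j))
        (Finset.mem_univ (t, i, i'))
      rw [← ha0] at h
      have hteq : ((List.ofFn t).map A).prod = (l.map A).prod := by rw [ht]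
      calc a0 ≤ ∑ j, min (M t i j) (M t i' j) := h
        _ = ∑ j, min ((l.map A).prod i j) ((l.map A).prod i' j) := by
            simp only [hM, hteq]
    have ha0pos : 0 < a0 := by
      rw [ha0, Finset.lt_inf'_iff]
      rintro ⟨t, i, i'⟩ -
      have hscrt : Wolfo.Scr (M t) := hscr (List.ofFn t) (by simp [hN0])
      obtain ⟨j, hj1, hj2⟩ := hscrt i i'
      calc (0 : ℝ) < min (M t i j) (M t i' j) := lt_min hj1 hj2
        _ ≤ ∑ j, min (M t i j) (M t i' j) :=
            Finset.single_le_sum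
              (fun k _ => le_min ((hMs t).1 i k) ((hMs t).1 i' k)) (Finset.mem_univ j)
    have ha0le1 : a0 ≤ 1 := by
      obtain ⟨⟨t0, i0, i0'⟩, -⟩ := hune.exists_mem
      have h := Finset.inf'_le
        (fun x : (Fin N0 → Fin m) × Fin n × Fin n =>
          ∑ j, min (M x.1 x.2.1 j) (M x.1 x.2.2 j))
        (Finset.mem_univ (t0, i0, i0'))
      rw [← ha0] at h
      refine le_trans h ?_
      calc ∑ j, min (M t0 i0 j) (M t0 i0' j) ≤ ∑ j, M t0 i0 j :=
            Finset.sum_le_sum fun j _ => min_le_left _ _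
        _ = 1 := (hMs t0).2 i0
    have chain : ∀ r : ℕ, ∀ w : List (Fin m), r * N0 ≤ w.length →
        ∀ i i' j : Fin n,
          ((w.map A).prod) i j - ((w.map A).prod) i' j ≤ (1 - a0) ^ r := by
      intro r
      induction r with
      | zero =>
        intro w _ i i' j
        have hPs := Wolfo.stoch_prod hn A hst w
        have h1 := Wolfo.entry_le_one hPs i j
        have h2 := hPs.1 i' j
        simp only [pow_zero]
        linarith
      | succ r ih =>
        intro w hlen i i' j
        have hsm : (r + 1) * N0 = r * N0 + N0 := by ring
        rw [hsm] at hlen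
        have hN0le : N0 ≤ w.length := by omega
        rw [Wolfo.prefix_split A w N0]
        have htake : (w.take N0).length = N0 := by
          rw [List.length_take]; exact min_eq_left hN0le
        have hdrop : r * N0 ≤ (w.drop N0).length := by
          rw [List.length_drop]; omega
        have hc := Wolfo.contraction hn (Wolfo.stoch_prod hn A hst (w.take N0))
          (Wolfo.stoch_prod hn A hst (w.drop N0)).1
          (pow_nonneg (by linarith : (0:ℝ) ≤ 1 - a0) r)
          (hover _ htake) (ih _ hdrop) i i' j
        calc _ ≤ (1 - a0) * (1 - a0) ^ r := hc
          _ = (1 - a0) ^ (r + 1) := by ring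
    obtain ⟨r, hr⟩ := exists_pow_lt_of_lt_one hε (show (1 : ℝ) - a0 < 1 by linarith)
    refine ⟨r * N0, fun w hw => ?_⟩
    have hPs := Wolfo.stoch_prod hn A hst w
    refine ⟨fun j => (w.map A).prod ⟨0, hn⟩ j, fun j => hPs.1 _ j, hPs.2 _, ?_⟩
    intro i j
    rw [abs_sub_le_iff]
    constructor
    · exact le_trans (chain r w hw i _ j) hr.le
    · exact le_trans (chain r w hw _ i j) hr.le
end

section
/- Let λ > 0 and τ > 0. Then every complex root s of the characteristic quasi-polynomial s + λ·e^{-τs} = 0 satisfies Re(s) < 0 if and only if λτ < π/2. -/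
open Real Set

/-- Auxiliary: building a root of the quasi-polynomial from an angle `θ` solving
the real transcendental equation. -/
lemma delay_root_construction (lam tau θ σ ω : ℝ) (hlam : 0 < lam) (htau : 0 < tau)
    (hsin : 0 < Real.sin θ)
    (hσ : σ = -(θ / tau) * (Real.cos θ / Real.sin θ))
    (hω : ω = θ / tau)
    (hg : lam * tau * (Real.exp (θ * (Real.cos θ / Real.sin θ)) * Real.sin θ) = θ) :
    ((σ : ℂ) + (ω : ℂ) * Complex.I) +
      (lam : ℂ) * Complex.exp (-(tau : ℂ) * ((σ : ℂ) + (ω : ℂ) * Complex.I)) = 0 := by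
  have hsne : Real.sin θ ≠ 0 := ne_of_gt hsin
  have htne : tau ≠ 0 := ne_of_gt htau
  have htω : tau * ω = θ := by rw [hω]; field_simp
  have hτσ : -(tau * σ) = θ * (Real.cos θ / Real.sin θ) := by
    rw [hσ]; field_simp
  have key1 : lam * Real.exp (θ * (Real.cos θ / Real.sin θ)) * Real.sin θ = ω := by
    rw [hω, eq_div_iff htne]; linear_combination hg
  have key2 : lam * Real.exp (θ * (Real.cos θ / Real.sin θ)) * Real.cos θ = -σ := by
    have step : lam * Real.exp (θ * (Real.cos θ / Real.sin θ)) * Real.cos θ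
        = (lam * Real.exp (θ * (Real.cos θ / Real.sin θ)) * Real.sin θ)
          * (Real.cos θ / Real.sin θ) := by
      field_simp
    rw [step, key1, hσ, hω]; ring
  have hzre : (-(tau : ℂ) * ((σ : ℂ) + (ω : ℂ) * Complex.I)).re = -(tau * σ) := by simp
  have hzim : (-(tau : ℂ) * ((σ : ℂ) + (ω : ℂ) * Complex.I)).im = -(tau * ω) := by simp
  have hEre : (Complex.exp (-(tau : ℂ) * ((σ : ℂ) + (ω : ℂ) * Complex.I))).re
      = Real.exp (θ * (Real.cos θ / Real.sin θ)) * Real.cos θ := by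
    rw [Complex.exp_re, hzre, hzim, hτσ, htω, Real.cos_neg]
  have hEim : (Complex.exp (-(tau : ℂ) * ((σ : ℂ) + (ω : ℂ) * Complex.I))).im
      = -(Real.exp (θ * (Real.cos θ / Real.sin θ)) * Real.sin θ) := by
    rw [Complex.exp_im, hzre, hzim, hτσ, htω, Real.sin_neg]; ring
  apply Complex.ext
  · simp only [Complex.add_re, Complex.mul_re, Complex.ofReal_re, Complex.ofReal_im,
      Complex.I_re, Complex.I_im, hEre, hEim, Complex.zero_re, mul_zero, mul_one,
      zero_mul, sub_zero, add_zero, zero_add, zero_sub]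
    linear_combination key2
  · simp only [Complex.add_im, Complex.mul_im, Complex.ofReal_re, Complex.ofReal_im,
      Complex.I_re, Complex.I_im, hEre, hEim, Complex.zero_im, mul_zero, mul_one,
      zero_mul, sub_zero, add_zero, zero_add, zero_sub]
    linear_combination -key1

/-- Stability criterion for the scalar delay equation `ẏ(t) = -λ y(t-τ)`: for
`λ > 0` and `τ > 0`, every complex root `s` of the characteristic quasi-polynomial
`s + λ e^{-τ s} = 0` satisfies `Re s < 0` if and only if `λτ < π/2`. -/
theorem delay_stability_iff_lambda_tau_lt_pi_div_two
    (lam tau : ℝ) (hlam : 0 < lam) (htau : 0 < tau) :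
    (∀ s : ℂ, s + (lam : ℂ) * Complex.exp (-(tau : ℂ) * s) = 0 → s.re < 0) ↔
      lam * tau < Real.pi / 2 := by
  have hpi := Real.pi_gt_three
  constructor
  · -- forward: contrapositive
    intro hall
    by_contra hge
    push_neg at hge  -- π/2 ≤ lam * tau
    set ε : ℝ := min (π / 4) (1 / (lam * tau)) with hεdef
    have hlt : 0 < lam * tau := mul_pos hlam htau
    have hε0 : 0 < ε := lt_min (by positivity) (by positivity)
    have hε4 : ε ≤ π / 4 := min_le_left _ _
    have hεlt : ε ≤ 1 / (lam * tau) := min_le_right _ _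
    set θ₁ : ℝ := π - ε with hθ₁def
    have hab : π / 2 ≤ θ₁ := by simp only [hθ₁def]; linarith
    have hθ₁ltπ : θ₁ < π := by simp only [hθ₁def]; linarith
    set g : ℝ → ℝ := fun θ =>
      lam * tau * (Real.exp (θ * (Real.cos θ / Real.sin θ)) * Real.sin θ) - θ with hgdef
    have hsinpos : ∀ θ ∈ Icc (π / 2) θ₁, 0 < Real.sin θ := by
      intro θ hθ
      exact Real.sin_pos_of_pos_of_lt_pi (by linarith [hθ.1]) (lt_of_le_of_lt hθ.2 hθ₁ltπ)
    have hcont : ContinuousOn g (Icc (π / 2) θ₁) := by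
      apply ContinuousOn.sub _ continuousOn_id
      apply ContinuousOn.mul continuousOn_const
      apply ContinuousOn.mul _ Real.continuous_sin.continuousOn
      apply Real.continuous_exp.comp_continuousOn
      exact ContinuousOn.mul continuousOn_id
        (Real.continuous_cos.continuousOn.div Real.continuous_sin.continuousOn
          fun θ hθ => ne_of_gt (hsinpos θ hθ))
    have hga : 0 ≤ g (π / 2) := by
      have : g (π / 2) = lam * tau - π / 2 := by
        simp [hgdef, Real.cos_pi_div_two, Real.sin_pi_div_two]
      rw [this]; linarith
    have hgb : g θ₁ < 0 := by
      have hs1 : 0 < Real.sin θ₁ := hsinpos θ₁ ⟨hab, le_refl _⟩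
      have hc1 : Real.cos θ₁ ≤ 0 :=
        Real.cos_nonpos_of_pi_div_two_le_of_le hab (by linarith)
      have hexp : Real.exp (θ₁ * (Real.cos θ₁ / Real.sin θ₁)) ≤ 1 := by
        rw [Real.exp_le_one_iff]
        have : Real.cos θ₁ / Real.sin θ₁ ≤ 0 := div_nonpos_of_nonpos_of_nonneg hc1 hs1.le
        nlinarith
      have hsθ₁ : Real.sin θ₁ = Real.sin ε := by rw [hθ₁def, Real.sin_pi_sub]
      have hsle : Real.sin θ₁ ≤ ε := by rw [hsθ₁]; exact Real.sin_le hε0.le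
      have hmul : lam * tau * Real.sin θ₁ ≤ 1 := by
        have h1 := mul_le_mul_of_nonneg_left hsle hlt.le
        have h2 : lam * tau * ε ≤ 1 := by
          have := mul_le_mul_of_nonneg_left hεlt hlt.le
          calc lam * tau * ε ≤ lam * tau * (1 / (lam * tau)) := this
            _ = 1 := by field_simp
        linarith
      have hkey : lam * tau * (Real.exp (θ₁ * (Real.cos θ₁ / Real.sin θ₁)) * Real.sin θ₁)
          ≤ lam * tau * Real.sin θ₁ := by
        nlinarith [mul_nonneg (mul_pos hlt hs1).le (sub_nonneg.mpr hexp)]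
      have hθ₁big : 1 < θ₁ := by simp only [hθ₁def]; linarith
      simp only [hgdef]
      linarith
    have hmem : (0 : ℝ) ∈ Icc (g θ₁) (g (π / 2)) := ⟨hgb.le, hga⟩
    obtain ⟨θ, hθmem, hθeq⟩ := intermediate_value_Icc' hab hcont hmem
    have hsθ : 0 < Real.sin θ := hsinpos θ hθmem
    have hcθ : Real.cos θ ≤ 0 :=
      Real.cos_nonpos_of_pi_div_two_le_of_le hθmem.1 (by linarith [hθmem.2])
    have hgθ : lam * tau * (Real.exp (θ * (Real.cos θ / Real.sin θ)) * Real.sin θ) = θ := by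
      have h := hθeq
      simp only [hgdef] at h
      linarith
    have hroot := delay_root_construction lam tau θ
      (-(θ / tau) * (Real.cos θ / Real.sin θ)) (θ / tau) hlam htau hsθ rfl rfl hgθ
    have hneg := hall _ hroot
    have hre : ((((-(θ / tau) * (Real.cos θ / Real.sin θ)) : ℝ) : ℂ)
        + ((θ / tau : ℝ) : ℂ) * Complex.I).re
        = -(θ / tau) * (Real.cos θ / Real.sin θ) := by
      simp only [Complex.add_re, Complex.ofReal_re, Complex.mul_re, Complex.ofReal_im,
        Complex.I_re, Complex.I_im, mul_zero, mul_one, zero_mul, sub_zero, add_zero]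
    rw [hre] at hneg
    have hσnn : 0 ≤ -(θ / tau) * (Real.cos θ / Real.sin θ) := by
      have h1 : 0 < θ / tau := div_pos (by linarith [hθmem.1]) htau
      have h2 : Real.cos θ / Real.sin θ ≤ 0 := div_nonpos_of_nonpos_of_nonneg hcθ hsθ.le
      nlinarith
    linarith
  · -- backward
    intro hlt s hs
    by_contra hre
    push_neg at hre  -- 0 ≤ s.re
    have hseq : s = -((lam : ℂ) * Complex.exp (-(tau : ℂ) * s)) := by
      linear_combination hs
    have hzre : (-(tau : ℂ) * s).re = -(tau * s.re) := by simp
    have hzim : (-(tau : ℂ) * s).im = -(tau * s.im) := by simp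
    have habs : ‖s‖ = lam * Real.exp (-(tau * s.re)) := by
      conv_lhs => rw [hseq]
      rw [norm_neg, norm_mul, Complex.norm_exp, hzre, Complex.norm_real, Real.norm_eq_abs,
        abs_of_pos hlam]
    have hexple : Real.exp (-(tau * s.re)) ≤ 1 := by
      rw [Real.exp_le_one_iff]
      nlinarith
    have habsle : ‖s‖ ≤ lam := by
      rw [habs]
      nlinarith [Real.exp_pos (-(tau * s.re))]
    have him : |s.im| ≤ lam := le_trans (Complex.abs_im_le_norm s) habsle
    have himlt : |tau * s.im| < π / 2 := by
      rw [abs_mul, abs_of_pos htau]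
      calc tau * |s.im| ≤ tau * lam := by nlinarith
        _ < π / 2 := by nlinarith
    have hcos : 0 < Real.cos (tau * s.im) := by
      apply Real.cos_pos_of_mem_Ioo
      constructor
      · linarith [neg_abs_le (tau * s.im), (abs_lt.mp himlt).1]
      · linarith [le_abs_self (tau * s.im)]
    have hEre : (Complex.exp (-(tau : ℂ) * s)).re
        = Real.exp (-(tau * s.re)) * Real.cos (tau * s.im) := by
      rw [Complex.exp_re, hzre, hzim, Real.cos_neg]
    have hreeq : s.re + lam * (Real.exp (-(tau * s.re)) * Real.cos (tau * s.im)) = 0 := by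
      have h := congrArg Complex.re hs
      simp only [Complex.add_re, Complex.mul_re, Complex.ofReal_re, Complex.ofReal_im,
        hEre, Complex.zero_re, zero_mul, sub_zero] at h
      linarith
    have hpos : 0 < lam * (Real.exp (-(tau * s.re)) * Real.cos (tau * s.im)) := by
      positivity
    linarith
end
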